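/- arXiv:1310.0726 — 7 statements merged into one kernel-verified Lean document; each statement's English description precedes it below -/
import Mathlib

section
/- Under the stated assumptions, for every real c < 0 one has liminf_{n → ∞} d_n(t_n + c·w_n) ≥ e^{−c}. -/
open Filter Real
open scoped ENNReal Topology

/-- Theorem 2 of Barrera–Ycart, lower (left-window) bound:
for every `c < 0`, `liminf_n d_n(t_n + c w_n) ≥ e^{-c}`.
Indices are zero-based: Lean index `i` corresponds to paper index `i+1`. -/
theorem left_window_liminf_bound
    (a ρ : ℕ → ℕ → ℝ)
    (hρ_pos : ∀ n i, 0 < ρ n i)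
    (hρ_mono : ∀ n, StrictMono (ρ n))
    (ha_nonneg : ∀ n i, 0 ≤ a n i)
    (ha_pos : ∀ n, 0 < a n 0)
    (A : ℕ → ℕ → ℝ)
    (hA : ∀ n i, A n i = max 1 (∑ j ∈ Finset.range (i + 1), a n j))
    (d : ℕ → ℝ → ℝ≥0∞)
    (hd : ∀ n s, d n s = ∑' i, ENNReal.ofReal (a n i * Real.exp (-(ρ n i) * s)))
    (t w r : ℕ → ℝ)
    (ht : ∀ᶠ n in atTop,
      IsLUB (Set.range fun i => Real.log (A n i) / ρ n i) (t n) ∧ 0 < t n)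
    (hw : ∀ n, w n = 1 / ρ n 0)
    (hr : ∀ n, r n = w n * (Real.log (ρ n 0 * t n) - Real.log (Real.log (ρ n 0 * t n))))
    (hPeres : Tendsto (fun n => ρ n 0 * t n) atTop atTop)
    (hα : ∃ α > (0 : ℝ), ∀ᶠ n in atTop, ∀ i, a n (i + 1) ≤ α * A n i) :
    ∀ c < (0 : ℝ), ENNReal.ofReal (Real.exp (-c)) ≤
      Filter.liminf (fun n => d n (t n + c * w n)) atTop := by
  intro c hc
  -- Key estimate: for every ε > 0, eventually d n (t n + c w n) ≥ exp (-c - ε).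
  have key : ∀ ε > (0 : ℝ), ∀ᶠ n in atTop,
      ENNReal.ofReal (Real.exp (-c - ε)) ≤ d n (t n + c * w n) := by
    intro ε hε
    filter_upwards [ht, hPeres.eventually_gt_atTop (-c)] with n hn hgt
    obtain ⟨hlub, htpos⟩ := hn
    have hρ0 : 0 < ρ n 0 := hρ_pos n 0
    set s := t n + c * w n with hs
    have hρ0s : ρ n 0 * s = ρ n 0 * t n + c := by
      rw [hs, hw n]; field_simp
    have hspos : 0 < s := by
      have h : ρ n 0 * 0 < ρ n 0 * s := by rw [mul_zero]; linarith
      exact (mul_lt_mul_iff_right₀ hρ0).mp h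
    -- the margin
    set m := min ε (-c / 2) with hm
    have hmpos : 0 < m := lt_min hε (by linarith)
    have hmε : m ≤ ε := min_le_left _ _
    have hmc : m ≤ -c / 2 := min_le_right _ _
    set ε' := m / ρ n 0 with hε'
    have hε'ρ : ρ n 0 * ε' = m := by rw [hε', mul_div_cancel₀ _ (ne_of_gt hρ0)]
    have hε'pos : 0 < ε' := div_pos hmpos hρ0
    -- pick an index i nearly attaining the sup
    obtain ⟨x, hxmem, hxgt, _⟩ := hlub.exists_between (show t n - ε' < t n by linarith)
    obtain ⟨i, hi⟩ := hxmem
    replace hi : Real.log (A n i) / ρ n i = x := hi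
    have hρi : ρ n 0 ≤ ρ n i := (hρ_mono n).monotone (Nat.zero_le i)
    have hρipos : 0 < ρ n i := hρ_pos n i
    set L := Real.log (A n i) / ρ n i with hLdef
    have hL : t n - ε' < L := by rw [hi]; exact hxgt
    have hlogA : Real.log (A n i) = L * ρ n i := (div_mul_cancel₀ _ (ne_of_gt hρipos)).symm
    -- t n - ε' > s
    have hsL : s < t n - ε' := by
      have h1 : ρ n 0 * s < ρ n 0 * (t n - ε') := by
        rw [mul_sub, hρ0s, hε'ρ]; linarith
      exact lt_of_mul_lt_mul_left (by linarith [h1]) (le_of_lt hρ0)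
    -- t n - ε' > 0
    have htε' : 0 < t n - ε' := lt_trans hspos hsL
    have hLpos : 0 < L := lt_trans htε' hL
    have hlogpos : 0 < Real.log (A n i) := by
      rw [hlogA]; exact mul_pos hLpos hρipos
    have hApos : (0 : ℝ) < A n i := lt_of_lt_of_le one_pos (by rw [hA]; exact le_max_left _ _)
    have hAgt1 : 1 < A n i := (Real.log_pos_iff hApos.le).mp hlogpos
    -- the partial sum equals A n i
    have hsum : ∑ j ∈ Finset.range (i + 1), a n j = A n i := by
      rw [hA n i]
      rcases le_or_gt (∑ j ∈ Finset.range (i + 1), a n j) 1 with h | h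
      · exfalso; rw [hA n i, max_eq_left h] at hAgt1; exact lt_irrefl _ hAgt1
      · rw [max_eq_right (le_of_lt h)]
    -- main real inequality
    have hLs : 0 < L - s := by linarith
    have hexp : Real.exp (-c - ε) ≤ A n i * Real.exp (-(ρ n i) * s) := by
      have h1 : A n i * Real.exp (-(ρ n i) * s) = Real.exp (Real.log (A n i) - ρ n i * s) := by
        rw [Real.exp_sub, Real.exp_log hApos, neg_mul, Real.exp_neg, div_eq_mul_inv]
      rw [h1, Real.exp_le_exp]
      have h2 : Real.log (A n i) - ρ n i * s = ρ n i * (L - s) := by rw [hlogA]; ring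
      have h3 : ρ n 0 * (L - s) ≤ ρ n i * (L - s) := by nlinarith
      have h4 : ρ n 0 * (t n - ε' - s) ≤ ρ n 0 * (L - s) := by nlinarith
      have h5 : ρ n 0 * (t n - ε' - s) = -m - c := by
        linear_combination (-1 : ℝ) * hρ0s + (-1 : ℝ) * hε'ρ
      rw [h2]; linarith
    -- compare with the partial sum of d
    have hterm : ∀ j ∈ Finset.range (i + 1),
        a n j * Real.exp (-(ρ n i) * s) ≤ a n j * Real.exp (-(ρ n j) * s) := by
      intro j hj
      have hji : ρ n j ≤ ρ n i := (hρ_mono n).monotone (Nat.lt_succ_iff.mp (Finset.mem_range.mp hj))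
      have h6 : -(ρ n i) * s ≤ -(ρ n j) * s := by nlinarith
      exact mul_le_mul_of_nonneg_left (Real.exp_le_exp.mpr h6) (ha_nonneg n j)
    have hreal : Real.exp (-c - ε) ≤ ∑ j ∈ Finset.range (i + 1), a n j * Real.exp (-(ρ n j) * s) := by
      calc Real.exp (-c - ε) ≤ A n i * Real.exp (-(ρ n i) * s) := hexp
        _ = ∑ j ∈ Finset.range (i + 1), a n j * Real.exp (-(ρ n i) * s) := by
            rw [← Finset.sum_mul, hsum]
        _ ≤ _ := Finset.sum_le_sum hterm
    calc ENNReal.ofReal (Real.exp (-c - ε))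
        ≤ ENNReal.ofReal (∑ j ∈ Finset.range (i + 1), a n j * Real.exp (-(ρ n j) * s)) :=
          ENNReal.ofReal_le_ofReal hreal
      _ = ∑ j ∈ Finset.range (i + 1), ENNReal.ofReal (a n j * Real.exp (-(ρ n j) * s)) :=
          ENNReal.ofReal_sum_of_nonneg
            (fun j _ => mul_nonneg (ha_nonneg n j) (Real.exp_pos _).le)
      _ ≤ ∑' j, ENNReal.ofReal (a n j * Real.exp (-(ρ n j) * s)) := ENNReal.sum_le_tsum _
      _ = d n s := (hd n s).symm
  -- liminf bound for each ε
  have hlim : ∀ ε > (0 : ℝ), ENNReal.ofReal (Real.exp (-c - ε)) ≤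
      Filter.liminf (fun n => d n (t n + c * w n)) atTop := by
    intro ε hε
    calc ENNReal.ofReal (Real.exp (-c - ε))
        = Filter.liminf (fun _ : ℕ => ENNReal.ofReal (Real.exp (-c - ε))) atTop :=
          (liminf_const _).symm
      _ ≤ _ := liminf_le_liminf (key ε hε)
  -- take ε → 0
  refine le_of_forall_lt fun b hb => ?_
  have hbtop : b ≠ ⊤ := ne_top_of_lt (lt_of_lt_of_le hb le_top)
  have hblt : b.toReal < Real.exp (-c) := (ENNReal.lt_ofReal_iff_toReal_lt hbtop).mp hb
  set x := (b.toReal + Real.exp (-c)) / 2 with hx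
  have hxpos : 0 < x := by
    have h1 := b.toReal_nonneg
    have h2 := Real.exp_pos (-c)
    rw [hx]; linarith
  have hxlt : x < Real.exp (-c) := by rw [hx]; linarith
  have hbx : b.toReal < x := by rw [hx]; linarith
  set ε := -c - Real.log x with hεdef
  have hεpos : 0 < ε := by
    have h7 : Real.log x < -c := by
      calc Real.log x < Real.log (Real.exp (-c)) := Real.log_lt_log hxpos hxlt
        _ = -c := Real.log_exp _
    rw [hεdef]; linarith
  have hexpx : Real.exp (-c - ε) = x := by
    rw [hεdef, show -c - (-c - Real.log x) = Real.log x by ring]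
    exact Real.exp_log hxpos
  have hfin : b < ENNReal.ofReal (Real.exp (-c - ε)) := by
    rw [hexpx]; exact (ENNReal.lt_ofReal_iff_toReal_lt hbtop).mpr hbx
  exact lt_of_lt_of_le hfin (hlim ε hεpos)
end

section
/- Under the stated assumptions, for every real c > 0 one has limsup_{n → ∞} d_n(t_n + r_n + c·w_n) ≤ e^{−c}. -/
open Filter Real
open scoped ENNReal Topology

private lemma convexOn_exp_neg : ConvexOn ℝ Set.univ (fun t : ℝ => Real.exp (-t)) := by
  have h := convexOn_exp.comp_affineMap (AffineMap.mk' (fun x : ℝ => -x) (-LinearMap.id) 0 (by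
    intro p; simp))
  simp only [Set.preimage_univ] at h
  exact h

private lemma key_ineq {x y : ℝ} (hx : 0 < x) (hxy : x ≤ y) :
    x * (1 - Real.exp (-y)) ≤ y * (1 - Real.exp (-x)) := by
  have hy : 0 < y := lt_of_lt_of_le hx hxy
  have hsec := convexOn_exp_neg.secant_mono (a := 0) (x := x) (y := y)
    trivial trivial trivial hx.ne' hy.ne' hxy
  simp only [neg_zero, Real.exp_zero, sub_zero] at hsec
  rw [div_le_div_iff₀ hx hy] at hsec
  nlinarith [hsec]

private lemma abel_bound (a ρ : ℕ → ℝ) (hρ_mono : StrictMono ρ)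
    (ha : ∀ i, 0 ≤ a i) (t u : ℝ) (ht : 0 < t) (hu : 0 < u)
    (hS : ∀ i, (∑ j ∈ Finset.range (i + 1), a j) ≤ Real.exp (ρ i * t)) :
    ∀ N, (∑ i ∈ Finset.range (N + 1), a i * Real.exp (-(ρ i) * (t + u)))
      ≤ (∑ j ∈ Finset.range (N + 1), a j) * Real.exp (-(ρ N) * (t + u))
        + ((t + u) / u) * (Real.exp (-(ρ 0) * u) - Real.exp (-(ρ N) * u)) := by
  intro N
  induction N with
  | zero => simp
  | succ N ih =>
    rw [Finset.sum_range_succ, Finset.sum_range_succ (f := a)]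
    have hδ : 0 < ρ (N + 1) - ρ N := sub_pos.2 (hρ_mono (Nat.lt_succ_self N))
    set δ : ℝ := ρ (N + 1) - ρ N with hδdef
    have hSN := hS N
    have hSnn : 0 ≤ ∑ j ∈ Finset.range (N + 1), a j := Finset.sum_nonneg fun i _ => ha i
    have hEle : Real.exp (-(ρ (N + 1)) * (t + u)) ≤ Real.exp (-(ρ N) * (t + u)) := by
      apply Real.exp_le_exp.2
      nlinarith [hρ_mono (Nat.lt_succ_self N)]
    have hkey := key_ineq (x := δ * u) (y := δ * (t + u)) (by positivity) (by nlinarith)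
    have hq : u * (1 - Real.exp (-(δ * (t + u)))) ≤ (t + u) * (1 - Real.exp (-(δ * u))) := by
      have h2 : δ * (u * (1 - Real.exp (-(δ * (t + u)))))
          ≤ δ * ((t + u) * (1 - Real.exp (-(δ * u)))) := by
        ring_nf at hkey ⊢; linarith
      exact le_of_mul_le_mul_left h2 hδ
    have e1 : Real.exp (ρ N * t) * Real.exp (-(ρ N) * (t + u)) = Real.exp (-(ρ N) * u) := by
      rw [← Real.exp_add]; congr 1; ring
    have e2 : Real.exp (ρ N * t) * Real.exp (-(ρ (N + 1)) * (t + u))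
        = Real.exp (-(ρ N) * u) * Real.exp (-(δ * (t + u))) := by
      rw [← Real.exp_add, ← Real.exp_add]; congr 1; rw [hδdef]; ring
    have e3 : Real.exp (-(ρ N) * u) * Real.exp (-(δ * u)) = Real.exp (-(ρ (N + 1)) * u) := by
      rw [← Real.exp_add]; congr 1; rw [hδdef]; ring
    have hcore : (∑ j ∈ Finset.range (N + 1), a j) *
        (Real.exp (-(ρ N) * (t + u)) - Real.exp (-(ρ (N + 1)) * (t + u)))
        ≤ ((t + u) / u) * (Real.exp (-(ρ N) * u) - Real.exp (-(ρ (N + 1)) * u)) := by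
      calc (∑ j ∈ Finset.range (N + 1), a j) *
            (Real.exp (-(ρ N) * (t + u)) - Real.exp (-(ρ (N + 1)) * (t + u)))
          ≤ Real.exp (ρ N * t) *
            (Real.exp (-(ρ N) * (t + u)) - Real.exp (-(ρ (N + 1)) * (t + u))) :=
            mul_le_mul_of_nonneg_right hSN (by linarith)
        _ = Real.exp (-(ρ N) * u) * (1 - Real.exp (-(δ * (t + u)))) := by
            rw [mul_sub, e1, e2]; ring
        _ ≤ Real.exp (-(ρ N) * u) * (((t + u) / u) * (1 - Real.exp (-(δ * u)))) := by
            apply mul_le_mul_of_nonneg_left _ (Real.exp_nonneg _)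
            rw [div_mul_eq_mul_div, le_div_iff₀ hu]
            linarith [hq]
        _ = ((t + u) / u) * (Real.exp (-(ρ N) * u) - Real.exp (-(ρ (N + 1)) * u)) := by
            rw [← e3]; ring
    nlinarith [ih, hcore]

private lemma tsum_ofReal_le {f : ℕ → ℝ} (hf : ∀ i, 0 ≤ f i) {M : ℝ}
    (h : ∀ N, ∑ i ∈ Finset.range N, f i ≤ M) :
    (∑' i, ENNReal.ofReal (f i)) ≤ ENNReal.ofReal M := by
  rw [ENNReal.tsum_eq_iSup_sum]
  apply iSup_le
  intro F
  obtain ⟨N, hFN⟩ := F.exists_nat_subset_range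
  calc ∑ i ∈ F, ENNReal.ofReal (f i)
      ≤ ∑ i ∈ Finset.range N, ENNReal.ofReal (f i) := Finset.sum_le_sum_of_subset hFN
    _ = ENNReal.ofReal (∑ i ∈ Finset.range N, f i) :=
        (ENNReal.ofReal_sum_of_nonneg fun i _ => hf i).symm
    _ ≤ ENNReal.ofReal M := ENNReal.ofReal_le_ofReal (h N)

private noncomputable def gfun (c : ℝ) : ℝ → ℝ := fun B =>
  Real.exp (-c) * (Real.log B / B) * (2 + B / (Real.log B - Real.log (Real.log B) + c))

private lemma g_tendsto {c : ℝ} (hc : 0 < c) :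
    Tendsto (gfun c) atTop (𝓝 (Real.exp (-c))) := by
  have hlogdiv : Tendsto (fun x : ℝ => Real.log x / x) atTop (𝓝 0) := by
    simpa using Real.isLittleO_log_id_atTop.tendsto_div_nhds_zero
  have hmain : Tendsto (fun B : ℝ =>
      Real.log B / (Real.log B - Real.log (Real.log B) + c)) atTop (𝓝 1) := by
    have hfrac : Tendsto (fun X : ℝ => X / (X - Real.log X + c)) atTop (𝓝 1) := by
      have hcdiv : Tendsto (fun X : ℝ => c / X) atTop (𝓝 0) :=
        tendsto_const_nhds.div_atTop tendsto_id
      have hden : Tendsto (fun X : ℝ => 1 - Real.log X / X + c / X) atTop (𝓝 1) := by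
        have := ((tendsto_const_nhds (x := (1 : ℝ))).sub hlogdiv).add hcdiv
        simpa using this
      have h1 : Tendsto (fun X : ℝ => (1 - Real.log X / X + c / X)⁻¹) atTop (𝓝 1) := by
        have := hden.inv₀ one_ne_zero
        simpa using this
      refine Tendsto.congr' ?_ h1
      filter_upwards [eventually_ge_atTop (1 : ℝ)] with X hX
      have hX0 : (0 : ℝ) < X := by linarith
      rw [show 1 - Real.log X / X + c / X = (X - Real.log X + c) / X by
        field_simp, ← one_div, one_div_div]
    exact hfrac.comp Real.tendsto_log_atTop
  have hsum : Tendsto (fun B : ℝ => Real.exp (-c) *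
      (2 * (Real.log B / B) + Real.log B / (Real.log B - Real.log (Real.log B) + c)))
      atTop (𝓝 (Real.exp (-c))) := by
    have := ((hlogdiv.const_mul (2 : ℝ)).add hmain).const_mul (Real.exp (-c))
    simpa using this
  refine Tendsto.congr' ?_ hsum
  filter_upwards [eventually_ge_atTop (3 : ℝ)] with B hB
  have hB0 : (0 : ℝ) < B := by linarith
  have hlogB : 1 < Real.log B := by
    rw [Real.lt_log_iff_exp_lt hB0]
    nlinarith [Real.exp_one_lt_d9]
  have hL : 0 < Real.log B - Real.log (Real.log B) + c := by
    have := Real.log_le_sub_one_of_pos (by linarith : (0 : ℝ) < Real.log B)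
    linarith
  unfold gfun
  field_simp

/-- Theorem 2 of Barrera–Ycart, upper (right-window) bound:
for every `c > 0`, `limsup_n d_n(t_n + r_n + c w_n) ≤ e^{-c}`.
Indices are zero-based: Lean index `i` corresponds to paper index `i+1`. -/
theorem right_window_limsup_bound
    (a ρ : ℕ → ℕ → ℝ)
    (hρ_pos : ∀ n i, 0 < ρ n i)
    (hρ_mono : ∀ n, StrictMono (ρ n))
    (ha_nonneg : ∀ n i, 0 ≤ a n i)
    (ha_pos : ∀ n, 0 < a n 0)
    (A : ℕ → ℕ → ℝ)
    (hA : ∀ n i, A n i = max 1 (∑ j ∈ Finset.range (i + 1), a n j))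
    (d : ℕ → ℝ → ℝ≥0∞)
    (hd : ∀ n s, d n s = ∑' i, ENNReal.ofReal (a n i * Real.exp (-(ρ n i) * s)))
    (t w r : ℕ → ℝ)
    (ht : ∀ᶠ n in atTop,
      IsLUB (Set.range fun i => Real.log (A n i) / ρ n i) (t n) ∧ 0 < t n)
    (hw : ∀ n, w n = 1 / ρ n 0)
    (hr : ∀ n, r n = w n * (Real.log (ρ n 0 * t n) - Real.log (Real.log (ρ n 0 * t n))))
    (hPeres : Tendsto (fun n => ρ n 0 * t n) atTop atTop)
    (hα : ∃ α > (0 : ℝ), ∀ᶠ n in atTop, ∀ i, a n (i + 1) ≤ α * A n i) :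
    ∀ c > (0 : ℝ), Filter.limsup (fun n => d n (t n + r n + c * w n)) atTop ≤
      ENNReal.ofReal (Real.exp (-c)) := by
  intro c hc
  have hev : ∀ᶠ n in atTop,
      d n (t n + r n + c * w n) ≤ ENNReal.ofReal (gfun c (ρ n 0 * t n)) := by
    filter_upwards [ht, hPeres.eventually_ge_atTop 3] with n hn hB3
    obtain ⟨hlub, htpos⟩ := hn
    have hρ0 : 0 < ρ n 0 := hρ_pos n 0
    have hB0 : (0 : ℝ) < ρ n 0 * t n := by positivity
    have hlogB : 1 < Real.log (ρ n 0 * t n) := by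
      rw [Real.lt_log_iff_exp_lt hB0]
      nlinarith [Real.exp_one_lt_d9]
    have hL : 0 < Real.log (ρ n 0 * t n) - Real.log (Real.log (ρ n 0 * t n)) + c := by
      have := Real.log_le_sub_one_of_pos (by linarith : (0 : ℝ) < Real.log (ρ n 0 * t n))
      linarith
    set L : ℝ := Real.log (ρ n 0 * t n) - Real.log (Real.log (ρ n 0 * t n)) + c with hLdef
    set u : ℝ := r n + c * w n with hudef
    have hwpos : 0 < w n := by rw [hw n]; positivity
    have hρu : ρ n 0 * u = L := by
      rw [hudef, hLdef, hr n, hw n]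
      field_simp
    have hupos : 0 < u := by
      have huwl : u = w n * L := by rw [hudef, hLdef, hr n]; ring
      rw [huwl]; exact mul_pos hwpos hL
    have hS : ∀ i, (∑ j ∈ Finset.range (i + 1), a n j) ≤ Real.exp (ρ n i * t n) := by
      intro i
      have h1 : Real.log (A n i) / ρ n i ≤ t n := hlub.1 ⟨i, rfl⟩
      have h2 : Real.log (A n i) ≤ ρ n i * t n := by
        rw [div_le_iff₀ (hρ_pos n i)] at h1; linarith
      have hApos : 0 < A n i := by
        rw [hA]; exact lt_of_lt_of_le one_pos (le_max_left _ _)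
      calc (∑ j ∈ Finset.range (i + 1), a n j) ≤ A n i := by
            rw [hA]; exact le_max_right _ _
        _ = Real.exp (Real.log (A n i)) := (Real.exp_log hApos).symm
        _ ≤ Real.exp (ρ n i * t n) := Real.exp_le_exp.2 h2
    have habel := abel_bound (a n) (ρ n) (hρ_mono n) (fun i => ha_nonneg n i)
      (t n) u htpos hupos hS
    have hsu : 0 < (t n + u) / u := div_pos (by linarith) hupos
    set M : ℝ := Real.exp (-(ρ n 0) * u) * (1 + (t n + u) / u) with hMdef
    have hMbound : ∀ N,
        (∑ i ∈ Finset.range N, a n i * Real.exp (-(ρ n i) * (t n + u))) ≤ M := by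
      intro N
      have hMpos : 0 < M := by
        rw [hMdef]; exact mul_pos (Real.exp_pos _) (by linarith)
      cases N with
      | zero => simpa using hMpos.le
      | succ N =>
        have h1 := habel N
        have h2 : (∑ j ∈ Finset.range (N + 1), a n j) * Real.exp (-(ρ n N) * (t n + u))
            ≤ Real.exp (-(ρ n 0) * u) := by
          calc (∑ j ∈ Finset.range (N + 1), a n j) * Real.exp (-(ρ n N) * (t n + u))
              ≤ Real.exp (ρ n N * t n) * Real.exp (-(ρ n N) * (t n + u)) :=
                mul_le_mul_of_nonneg_right (hS N) (Real.exp_nonneg _)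
            _ = Real.exp (-(ρ n N) * u) := by rw [← Real.exp_add]; congr 1; ring
            _ ≤ Real.exp (-(ρ n 0) * u) := by
                apply Real.exp_le_exp.2
                have hmon : ρ n 0 ≤ ρ n N := (hρ_mono n).monotone (Nat.zero_le N)
                nlinarith
        have h3 : ((t n + u) / u) * (Real.exp (-(ρ n 0) * u) - Real.exp (-(ρ n N) * u))
            ≤ ((t n + u) / u) * Real.exp (-(ρ n 0) * u) := by
          apply mul_le_mul_of_nonneg_left _ hsu.le
          have := Real.exp_nonneg (-(ρ n N) * u); linarith
        rw [hMdef]; nlinarith [h1, h2, h3]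
    have hdle : d n (t n + r n + c * w n) ≤ ENNReal.ofReal M := by
      rw [hd, show t n + r n + c * w n = t n + u by rw [hudef]; ring]
      exact tsum_ofReal_le (fun i => mul_nonneg (ha_nonneg n i) (Real.exp_nonneg _)) hMbound
    refine hdle.trans (ENNReal.ofReal_le_ofReal (le_of_eq ?_))
    have hρu' := hρu
    rw [hLdef] at hρu'
    have e1 : Real.exp (-(ρ n 0) * u) =
        Real.exp (-c) * (Real.log (ρ n 0 * t n) / (ρ n 0 * t n)) := by
      rw [show -(ρ n 0) * u
          = -c + (Real.log (Real.log (ρ n 0 * t n)) + -Real.log (ρ n 0 * t n)) by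
          linear_combination -hρu']
      rw [Real.exp_add, Real.exp_add,
        Real.exp_log (by linarith : (0 : ℝ) < Real.log (ρ n 0 * t n)),
        Real.exp_neg (Real.log (ρ n 0 * t n)), Real.exp_log hB0]
      ring
    have e2 : 1 + (t n + u) / u = 2 + (ρ n 0 * t n) / L := by
      have ht_u : (ρ n 0 * t n) / L = t n / u := by
        rw [← hρu]; exact mul_div_mul_left _ _ hρ0.ne'
      rw [ht_u, add_div, div_self hupos.ne']; ring
    rw [hMdef, e1, e2]
    unfold gfun
    rw [hLdef]
  have hlim : Tendsto (fun n => ENNReal.ofReal (gfun c (ρ n 0 * t n))) atTop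
      (𝓝 (ENNReal.ofReal (Real.exp (-c)))) :=
    ENNReal.tendsto_ofReal ((g_tendsto hc).comp hPeres)
  calc Filter.limsup (fun n => d n (t n + r n + c * w n)) atTop
      ≤ Filter.limsup (fun n => ENNReal.ofReal (gfun c (ρ n 0 * t n))) atTop :=
        Filter.limsup_le_limsup hev
    _ = ENNReal.ofReal (Real.exp (-c)) := hlim.limsup_eq
end

section
/- Under the stated assumptions, a left-window cutoff at (t_n, w_n) holds with maximal distance M = +∞: lim_{c → −∞} liminf_{n → ∞} inf_{0 < t < t_n + c·w_n} d_n(t) = +∞. (Note that each d_n is nonincreasing in t since all coefficients a_{i,n} are nonnegative, so inf_{0 < t < t_n + c·w_n} d_n(t) = d_n(t_n + c·w_n) whenever t_n + c·w_n > 0.) -/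
open Filter Real
open scoped ENNReal Topology

/-- Theorem 2 of Barrera–Ycart: a left-window cutoff at `(t_n, w_n)` with
maximal distance `M = +∞` holds:
`lim_{c → -∞} liminf_n inf_{0 < s < t_n + c w_n} d_n(s) = +∞`.
Indices are zero-based: Lean index `i` corresponds to paper index `i+1`. -/
theorem left_window_cutoff
    (a ρ : ℕ → ℕ → ℝ)
    (hρ_pos : ∀ n i, 0 < ρ n i)
    (hρ_mono : ∀ n, StrictMono (ρ n))
    (ha_nonneg : ∀ n i, 0 ≤ a n i)
    (ha_pos : ∀ n, 0 < a n 0)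
    (A : ℕ → ℕ → ℝ)
    (hA : ∀ n i, A n i = max 1 (∑ j ∈ Finset.range (i + 1), a n j))
    (d : ℕ → ℝ → ℝ≥0∞)
    (hd : ∀ n s, d n s = ∑' i, ENNReal.ofReal (a n i * Real.exp (-(ρ n i) * s)))
    (t w r : ℕ → ℝ)
    (ht : ∀ᶠ n in atTop,
      IsLUB (Set.range fun i => Real.log (A n i) / ρ n i) (t n) ∧ 0 < t n)
    (hw : ∀ n, w n = 1 / ρ n 0)
    (hr : ∀ n, r n = w n * (Real.log (ρ n 0 * t n) - Real.log (Real.log (ρ n 0 * t n))))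
    (hPeres : Tendsto (fun n => ρ n 0 * t n) atTop atTop)
    (hα : ∃ α > (0 : ℝ), ∀ᶠ n in atTop, ∀ i, a n (i + 1) ≤ α * A n i) :
    Tendsto
      (fun c : ℝ => Filter.liminf
        (fun n => ⨅ (s : ℝ) (_ : 0 < s ∧ s < t n + c * w n), d n s) atTop)
      atBot (𝓝 (⊤ : ℝ≥0∞)) := by

  have key : ∀ c < (0:ℝ), ∀ n,
      (IsLUB (Set.range fun i => Real.log (A n i) / ρ n i) (t n) ∧ 0 < t n) →
      ENNReal.ofReal (Real.exp (-c/2)) ≤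
        ⨅ (s : ℝ) (_ : 0 < s ∧ s < t n + c * w n), d n s := by
    intro c hc n hn
    obtain ⟨hlub, htn⟩ := hn
    have hw0 : 0 < ρ n 0 := hρ_pos n 0
    have hwn : w n = 1 / ρ n 0 := hw n
    have hwpos : 0 < w n := by rw [hwn]; positivity
    have hρ0w : ρ n 0 * w n = 1 := by rw [hwn]; field_simp
    set θ := max (t n + c * w n / 2) (t n / 2) with hθ
    have hθlt : θ < t n := by
      apply max_lt
      · nlinarith
      · linarith
    have hθpos : 0 < θ := lt_of_lt_of_le (by linarith) (le_max_right _ _)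
    obtain ⟨x, hx, hθx, _⟩ := hlub.exists_between hθlt
    obtain ⟨i, rfl⟩ := hx
    have hρi : 0 < ρ n i := hρ_pos n i
    set Li := Real.log (A n i) / ρ n i with hLi
    have hlogA : Real.log (A n i) = ρ n i * Li := by
      rw [hLi]; field_simp
    have hApos : 0 < A n i := by rw [hA]; exact lt_of_lt_of_le one_pos (le_max_left _ _)
    have hA1 : 1 < A n i := by
      by_contra h
      push_neg at h
      have := Real.log_nonpos hApos.le h
      nlinarith [hθpos.trans hθx]
    have hSA : A n i = ∑ j ∈ Finset.range (i+1), a n j := by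
      have hS1 : 1 ≤ ∑ j ∈ Finset.range (i+1), a n j := by
        by_contra h
        push_neg at h
        rw [hA, max_eq_left h.le] at hA1
        exact lt_irrefl _ hA1
      rw [hA, max_eq_right hS1]
    refine le_iInf fun s => le_iInf fun hs => ?_
    obtain ⟨hs0, hs1⟩ := hs
    rw [hd]
    have hLis : -c * w n / 2 ≤ Li - s := by
      have h2 : t n + c * w n / 2 ≤ θ := le_max_left _ _
      linarith [hθx.le, hs1.le]
    have hρ0i : ρ n 0 ≤ ρ n i := (hρ_mono n).monotone (Nat.zero_le i)
    have h1 : -c/2 ≤ ρ n i * (Li - s) := by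
      have hLspos : 0 < Li - s := by nlinarith
      nlinarith [mul_le_mul_of_nonneg_right hρ0i hLspos.le]
    calc ENNReal.ofReal (Real.exp (-c/2))
        ≤ ENNReal.ofReal (∑ j ∈ Finset.range (i+1), a n j * Real.exp (-(ρ n j) * s)) := by
          apply ENNReal.ofReal_le_ofReal
          have hsum : (∑ j ∈ Finset.range (i+1), a n j) * Real.exp (-(ρ n i) * s)
              ≤ ∑ j ∈ Finset.range (i+1), a n j * Real.exp (-(ρ n j) * s) := by
            rw [Finset.sum_mul]
            apply Finset.sum_le_sum
            intro j hj
            have hji : j ≤ i := Nat.lt_succ_iff.mp (Finset.mem_range.mp hj)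
            have hρji : ρ n j ≤ ρ n i := (hρ_mono n).monotone hji
            exact mul_le_mul_of_nonneg_left
              (Real.exp_le_exp.mpr (by nlinarith)) (ha_nonneg n j)
          calc Real.exp (-c/2) ≤ Real.exp (ρ n i * (Li - s)) := Real.exp_le_exp.mpr h1
            _ = A n i * Real.exp (-(ρ n i) * s) := by
                rw [← Real.exp_log hApos, ← Real.exp_add, hlogA]
                ring_nf
            _ = (∑ j ∈ Finset.range (i+1), a n j) * Real.exp (-(ρ n i) * s) := by rw [hSA]
            _ ≤ _ := hsum
      _ = ∑ j ∈ Finset.range (i+1), ENNReal.ofReal (a n j * Real.exp (-(ρ n j) * s)) :=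
          ENNReal.ofReal_sum_of_nonneg (fun j _ => mul_nonneg (ha_nonneg n j) (Real.exp_pos _).le)
      _ ≤ ∑' j, ENNReal.ofReal (a n j * Real.exp (-(ρ n j) * s)) := ENNReal.sum_le_tsum _
  have hlim : ∀ c < (0:ℝ), ENNReal.ofReal (Real.exp (-c/2)) ≤
      liminf (fun n => ⨅ (s : ℝ) (_ : 0 < s ∧ s < t n + c * w n), d n s) atTop := by
    intro c hc
    exact le_liminf_of_le (by isBoundedDefault) (ht.mono fun n hn => key c hc n hn)
  rw [ENNReal.tendsto_nhds_top_iff_nat]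
  intro m
  filter_upwards [eventually_le_atBot (min (-1 : ℝ) (-2 * Real.log (m+1)))] with c hc
  have hc0 : c < 0 := lt_of_le_of_lt (hc.trans (min_le_left _ _)) (by norm_num)
  have hc2 : c ≤ -2 * Real.log (m+1) := hc.trans (min_le_right _ _)
  refine lt_of_lt_of_le ?_ (hlim c hc0)
  have hexp : (m:ℝ) + 1 ≤ Real.exp (-c/2) := by
    calc (m:ℝ)+1 = Real.exp (Real.log ((m:ℝ)+1)) := (Real.exp_log (by positivity)).symm
      _ ≤ Real.exp (-c/2) := Real.exp_le_exp.mpr (by linarith)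
  calc (m : ℝ≥0∞) < (m:ℝ≥0∞) + 1 := ENNReal.lt_add_right (ENNReal.natCast_ne_top m) one_ne_zero
    _ = ENNReal.ofReal ((m:ℝ)+1) := by
        rw [ENNReal.ofReal_add (by positivity) zero_le_one, ENNReal.ofReal_natCast,
          ENNReal.ofReal_one]
    _ ≤ ENNReal.ofReal (Real.exp (-c/2)) := ENNReal.ofReal_le_ofReal hexp
end

section
/- Fix n and suppose the supremum defining t_n satisfies 0 < t_n < ∞. Let c < 0 and let ε be a real with 0 < ε < −c, and assume t_n + c·w_n > 0. Then d_n(t_n + c·w_n) ≥ e^{−c−ε}. -/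
open Filter Real
open scoped ENNReal

/-- Fixed-`n` lower bound from the proof of (7) in Barrera–Ycart:
if `t_n = sup_i log(A_i)/ρ_i ∈ (0, ∞)`, `w = 1/ρ_1`, `c < 0`, `0 < ε < -c`
and `t_n + c w > 0`, then `d_n(t_n + c w) ≥ e^{-c-ε}`.
Indices are zero-based: Lean index `i` corresponds to paper index `i+1`. -/
theorem fixed_n_lower_bound
    (a ρ : ℕ → ℝ)
    (hρ_pos : ∀ i, 0 < ρ i)
    (hρ_mono : StrictMono ρ)
    (ha_nonneg : ∀ i, 0 ≤ a i)
    (ha_pos : 0 < a 0)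
    (A : ℕ → ℝ)
    (hA : ∀ i, A i = max 1 (∑ j ∈ Finset.range (i + 1), a j))
    (tn : ℝ)
    (htn : IsLUB (Set.range fun i => Real.log (A i) / ρ i) tn)
    (htn_pos : 0 < tn)
    (w : ℝ) (hw : w = 1 / ρ 0)
    (c ε : ℝ) (hc : c < 0) (hε : 0 < ε) (hεc : ε < -c)
    (hpos : 0 < tn + c * w) :
    ENNReal.ofReal (Real.exp (-c - ε)) ≤
      ∑' i, ENNReal.ofReal (a i * Real.exp (-(ρ i) * (tn + c * w))) := by
  set t := tn + c * w with ht
  have hρ0 : 0 < ρ 0 := hρ_pos 0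
  have hw0 : 0 < w := by rw [hw]; positivity
  have hρ0w : ρ 0 * w = 1 := by rw [hw]; field_simp
  have hδ : 0 < ε * w := mul_pos hε hw0
  have hlt : tn - ε * w < tn := by linarith
  obtain ⟨x, ⟨i, rfl⟩, hx, -⟩ := htn.exists_between hlt
  have hρi : 0 < ρ i := hρ_pos i
  have hρ0i : ρ 0 ≤ ρ i := hρ_mono.monotone (Nat.zero_le i)
  have hεcw : ε * w < -(c * w) := by nlinarith
  have hcwδ : c * w + ε * w < 0 := by nlinarith
  have htnδ : 0 < tn - ε * w := by nlinarith
  have hlogA : ρ i * (tn - ε * w) < Real.log (A i) := by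
    rwa [lt_div_iff₀ hρi, mul_comm] at hx
  have hlog_pos : 0 < Real.log (A i) := lt_trans (by positivity) hlogA
  have hA1 : 1 < A i := by
    by_contra h
    push_neg at h
    exact absurd (Real.log_nonpos (by rw [hA]; positivity) h) (not_le.mpr hlog_pos)
  have hAsum : A i = ∑ j ∈ Finset.range (i + 1), a j := by
    rw [hA]
    apply max_eq_right
    by_contra h
    push_neg at h
    rw [hA, max_eq_left h.le] at hA1
    exact lt_irrefl 1 hA1
  have hApos : 0 < A i := lt_trans one_pos hA1
  have key : Real.exp (-c - ε) ≤
      ∑ j ∈ Finset.range (i + 1), a j * Real.exp (-(ρ j) * t) := by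
    have h1 : -c - ε = -(ρ 0) * (c * w + ε * w) := by
      linear_combination (c + ε) * hρ0w
    have h2 : Real.exp (-(ρ 0) * (c * w + ε * w)) ≤
        Real.exp (-(ρ i) * (c * w + ε * w)) := by
      apply Real.exp_le_exp.mpr; nlinarith
    have h3 : -(ρ i) * (c * w + ε * w) = ρ i * (tn - ε * w) - ρ i * t := by
      rw [ht]; ring
    have h4 : Real.exp (ρ i * (tn - ε * w) - ρ i * t) ≤ A i * Real.exp (-(ρ i) * t) := by
      have heq : ρ i * (tn - ε * w) - ρ i * t = ρ i * (tn - ε * w) + -(ρ i) * t := by ring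
      rw [heq, Real.exp_add]
      apply mul_le_mul_of_nonneg_right _ (Real.exp_nonneg _)
      calc Real.exp (ρ i * (tn - ε * w)) ≤ Real.exp (Real.log (A i)) :=
            Real.exp_le_exp.mpr hlogA.le
        _ = A i := Real.exp_log hApos
    have h5 : A i * Real.exp (-(ρ i) * t) ≤
        ∑ j ∈ Finset.range (i + 1), a j * Real.exp (-(ρ j) * t) := by
      rw [hAsum, Finset.sum_mul]
      apply Finset.sum_le_sum
      intro j hj
      apply mul_le_mul_of_nonneg_left _ (ha_nonneg j)
      apply Real.exp_le_exp.mpr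
      have hji : ρ j ≤ ρ i := hρ_mono.monotone (Nat.lt_succ_iff.mp (Finset.mem_range.mp hj))
      nlinarith
    calc Real.exp (-c - ε) = Real.exp (-(ρ 0) * (c * w + ε * w)) := by rw [← h1]
      _ ≤ Real.exp (-(ρ i) * (c * w + ε * w)) := h2
      _ = Real.exp (ρ i * (tn - ε * w) - ρ i * t) := by rw [h3]
      _ ≤ A i * Real.exp (-(ρ i) * t) := h4
      _ ≤ _ := h5
  calc ENNReal.ofReal (Real.exp (-c - ε))
      ≤ ENNReal.ofReal (∑ j ∈ Finset.range (i + 1), a j * Real.exp (-(ρ j) * t)) :=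
        ENNReal.ofReal_le_ofReal key
    _ = ∑ j ∈ Finset.range (i + 1), ENNReal.ofReal (a j * Real.exp (-(ρ j) * t)) := by
        rw [ENNReal.ofReal_sum_of_nonneg]
        intro j _
        exact mul_nonneg (ha_nonneg j) (Real.exp_nonneg _)
    _ ≤ ∑' j, ENNReal.ofReal (a j * Real.exp (-(ρ j) * t)) := ENNReal.sum_le_tsum _
end

section
/- Fix n, let l ≥ 1 be an index with a_1 + ⋯ + a_l ≥ 1 (so that A_i equals the true partial sum for all i ≥ l), suppose log(A_i)/ρ_i ≤ t for all i, where t > 0, and let s > 0. Then Σ_{i=l+1}^∞ a_i e^{−ρ_i (t+s)} ≤ (t/s) · A_l^{−s/t}. -/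
open Filter Real
open scoped ENNReal

private lemma riemann_key (p u v : ℝ) (hp : 0 < p) (hu : 0 < u) (huv : u ≤ v) :
    (v - u) * v ^ (-(1 + p)) ≤ (u ^ (-p) - v ^ (-p)) / p := by
  have hv : 0 < v := lt_of_lt_of_le hu huv
  have h0 : (0 : ℝ) ∉ Set.uIcc u v := by
    rw [Set.mem_uIcc]
    push_neg
    constructor <;> intro h <;> linarith
  have hne : -(1 + p) ≠ -1 := by intro h; nlinarith
  have hint : (∫ x in u..v, x ^ (-(1 + p))) = (v ^ (-p) - u ^ (-p)) / (-p) := by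
    rw [integral_rpow (Or.inr ⟨hne, h0⟩)]
    have : -(1 + p) + 1 = -p := by ring
    rw [this]
  have hcont : ContinuousOn (fun x : ℝ => x ^ (-(1 + p))) (Set.uIcc u v) := by
    intro x hx
    exact (Real.continuousAt_rpow_const x _ (Or.inl (by intro h; exact h0 (h ▸ hx)))).continuousWithinAt
  have hmono : ∀ x ∈ Set.Icc u v, v ^ (-(1 + p)) ≤ x ^ (-(1 + p)) := by
    intro x hx
    exact Real.rpow_le_rpow_of_nonpos (lt_of_lt_of_le hu hx.1) hx.2 (by linarith)
  have hI : (v - u) * v ^ (-(1 + p)) ≤ ∫ x in u..v, x ^ (-(1 + p)) := by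
    have := intervalIntegral.integral_mono_on (f := fun _ => v ^ (-(1 + p)))
      (g := fun x : ℝ => x ^ (-(1 + p))) (μ := MeasureTheory.volume) huv (intervalIntegrable_const)
      (hcont.intervalIntegrable) hmono
    simpa [smul_eq_mul] using this
  have hI2 : (v - u) * v ^ (-(1 + p)) ≤ (v ^ (-p) - u ^ (-p)) / (-p) := hint ▸ hI
  have e : (v ^ (-p) - u ^ (-p)) / (-p) = (u ^ (-p) - v ^ (-p)) / p := by
    rw [div_neg]; ring
  linarith [e ▸ hI2]

/-- Riemann-sum tail bound from the proof of (8) in Barrera–Ycart: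
if `A_i = max{1, a_1 + ⋯ + a_i}`, `a_1 + ⋯ + a_l ≥ 1` for some `l ≥ 1`,
`log(A_i)/ρ_i ≤ t` for all `i`, `t > 0` and `s > 0`, then
`Σ_{i=l+1}^∞ a_i e^{-ρ_i (t+s)} ≤ (t/s) A_l^{-s/t}`.
Here `a`, `ρ` are zero-based (Lean index `i` is paper index `i+1`), while
`A k = max 1 (a 0 + ⋯ + a (k-1))` is the paper's `A_k`; the paper tail sum
`Σ_{i=l+1}^∞` is `∑' k : ℕ` over the terms of Lean index `l + k`. -/
theorem riemann_tail_bound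
    (a ρ : ℕ → ℝ)
    (hρ_pos : ∀ i, 0 < ρ i)
    (hρ_mono : StrictMono ρ)
    (ha_nonneg : ∀ i, 0 ≤ a i)
    (A : ℕ → ℝ)
    (hA : ∀ k, A k = max 1 (∑ j ∈ Finset.range k, a j))
    (l : ℕ) (hl : 1 ≤ l)
    (hl1 : 1 ≤ ∑ j ∈ Finset.range l, a j)
    (t : ℝ) (ht : 0 < t)
    (hle : ∀ i, Real.log (A (i + 1)) / ρ i ≤ t)
    (s : ℝ) (hs : 0 < s) :
    ∑' k : ℕ, ENNReal.ofReal (a (l + k) * Real.exp (-(ρ (l + k)) * (t + s))) ≤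
      ENNReal.ofReal (t / s * A l ^ (-(s / t))) := by
  set p : ℝ := s / t with hp_def
  have hp : 0 < p := div_pos hs ht
  -- A basic facts
  have hA_ge_one : ∀ k, 1 ≤ A k := fun k => (hA k) ▸ le_max_left _ _
  have hA_pos : ∀ k, 0 < A k := fun k => lt_of_lt_of_le one_pos (hA_ge_one k)
  -- for i ≥ l, A equals partial sum
  have hSl : ∀ m, A (l + m) = ∑ j ∈ Finset.range (l + m), a j := by
    intro m
    rw [hA]
    refine max_eq_right ?_
    calc (1:ℝ) ≤ ∑ j ∈ Finset.range l, a j := hl1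
      _ ≤ _ := Finset.sum_le_sum_of_subset_of_nonneg
          (Finset.range_subset_range.mpr (Nat.le_add_right _ _)) (fun i _ _ => ha_nonneg i)
  have hA_diff : ∀ m, A (l + m + 1) - A (l + m) = a (l + m) := by
    intro m
    have h1 := hSl (m + 1)
    have h2 := hSl m
    rw [show l + (m+1) = (l + m) + 1 by ring] at h1
    rw [h1, h2, Finset.sum_range_succ]
    ring
  have hA_le : ∀ m, A (l + m) ≤ A (l + m + 1) := by
    intro m
    have := hA_diff m
    have := ha_nonneg (l + m)
    linarith
  -- pointwise bound: a i * exp(-ρ i (t+s)) ≤ a i * A(i+1)^(-(1+p))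
  have hpt : ∀ i : ℕ, a i * Real.exp (-(ρ i) * (t + s)) ≤ a i * A (i + 1) ^ (-(1 + p)) := by
    intro i
    refine mul_le_mul_of_nonneg_left ?_ (ha_nonneg i)
    have hρi := hρ_pos i
    have hlog : Real.log (A (i + 1)) ≤ t * ρ i := by
      have := hle i
      rw [div_le_iff₀ hρi] at this
      linarith
    have hexp : Real.exp (-(ρ i) * t) ≤ (A (i + 1)) ^ (-(1:ℝ)) := by
      rw [Real.rpow_neg_one]
      rw [show (A (i+1))⁻¹ = Real.exp (-(Real.log (A (i+1)))) by
        rw [Real.exp_neg, Real.exp_log (hA_pos _)]]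
      apply Real.exp_le_exp.mpr
      nlinarith
    have hA1pos : (0:ℝ) < A (i + 1) := hA_pos _
    have hexp_p : Real.exp (-(ρ i) * s) ≤ (A (i + 1)) ^ (-p) := by
      have : Real.exp (-(ρ i) * s) = (Real.exp (-(ρ i) * t)) ^ p := by
        rw [← Real.exp_mul]
        rw [hp_def]
        field_simp
      rw [this, show (-p : ℝ) = (-1) * p by ring, Real.rpow_mul (le_of_lt hA1pos)]
      exact Real.rpow_le_rpow (Real.exp_nonneg _) (by simpa using hexp) (le_of_lt hp)
    calc Real.exp (-(ρ i) * (t + s))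
        = Real.exp (-(ρ i) * t) * Real.exp (-(ρ i) * s) := by
          rw [← Real.exp_add]; ring_nf
      _ ≤ (A (i + 1)) ^ (-(1:ℝ)) * (A (i + 1)) ^ (-p) := by
          exact mul_le_mul hexp hexp_p (Real.exp_nonneg _) (Real.rpow_nonneg (le_of_lt hA1pos) _)
      _ = (A (i + 1)) ^ (-(1 + p)) := by
          rw [← Real.rpow_add hA1pos]; ring_nf
  -- telescoping bound on partial sums
  have hpartial : ∀ n : ℕ, ∑ k ∈ Finset.range n, a (l + k) * Real.exp (-(ρ (l + k)) * (t + s))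
      ≤ t / s * A l ^ (-p) := by
    intro n
    have step : ∀ k, a (l + k) * Real.exp (-(ρ (l + k)) * (t + s))
        ≤ (A (l + k) ^ (-p) - A (l + k + 1) ^ (-p)) / p := by
      intro k
      calc a (l + k) * Real.exp (-(ρ (l + k)) * (t + s))
          ≤ a (l + k) * A (l + k + 1) ^ (-(1 + p)) := hpt (l + k)
        _ = (A (l + k + 1) - A (l + k)) * A (l + k + 1) ^ (-(1 + p)) := by rw [hA_diff]
        _ ≤ (A (l + k) ^ (-p) - A (l + k + 1) ^ (-p)) / p :=
            riemann_key p _ _ hp (hA_pos _) (hA_le k)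
    calc ∑ k ∈ Finset.range n, a (l + k) * Real.exp (-(ρ (l + k)) * (t + s))
        ≤ ∑ k ∈ Finset.range n, (A (l + k) ^ (-p) - A (l + k + 1) ^ (-p)) / p :=
          Finset.sum_le_sum (fun k _ => step k)
      _ = (A l ^ (-p) - A (l + n) ^ (-p)) / p := by
          rw [← Finset.sum_div]
          congr 1
          have := Finset.sum_range_sub' (fun k => A (l + k) ^ (-p)) n
          simpa [add_assoc] using this
      _ ≤ A l ^ (-p) / p := by
          have h0 : 0 ≤ A (l + n) ^ (-p) := Real.rpow_nonneg (le_of_lt (hA_pos _)) _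
          gcongr
          linarith
      _ = t / s * A l ^ (-p) := by
          rw [hp_def]
          field_simp
  apply ENNReal.tsum_le_of_sum_range_le
  intro n
  rw [← ENNReal.ofReal_sum_of_nonneg (fun i _ => mul_nonneg (ha_nonneg _) (Real.exp_nonneg _))]
  apply ENNReal.ofReal_le_ofReal
  simpa [neg_div] using hpartial n
end

section
/- Assume that the (possibly infinite) limit γ = lim_{n → ∞} (1 − β_n)·ℓ_n exists in [0, +∞]. Then for every real c, lim_{n → ∞} d_n(t_n + (1 − β_n)·r_n + c·w_n) = e^{−c}·(1 + e^{−γ}) (with the convention e^{−∞} = 0). -/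
open Filter Real
open scoped ENNReal Topology

/-- `ℓ_n = log(n / log n)`. -/
noncomputable def ell (n : ℕ) : ℝ := Real.log (n / Real.log n)

/-- Distance to equilibrium of the Ornstein–Uhlenbeck example of Barrera–Ycart:
`d_n(t) = Σ_{i=1}^{9^n} a_{i,n} e^{-ρ_{i,n} t}` with `a_{1,n} = e^n`,
`ρ_{1,n} = n/(1 + (β_n/n) ℓ_n)`, and for `2 ≤ i ≤ 9^n`:
`a_{i,n} = e^{-n}`, `ρ_{i,n} = log(e^n + (i-1) e^{-n})`. -/
noncomputable def dCut (β : ℕ → ℝ) (n : ℕ) (t : ℝ) : ℝ :=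
  Real.exp n * Real.exp (-((n : ℝ) / (1 + β n / n * ell n)) * t) +
    ∑ i ∈ Finset.Icc (2 : ℕ) (9 ^ n),
      Real.exp (-(n : ℝ)) *
        Real.exp (-Real.log (Real.exp n + ((i : ℝ) - 1) * Real.exp (-(n : ℝ))) * t)

/-- Cutoff location `t_n = 1 + β_n ℓ_n / n`. -/
noncomputable def cutT (β : ℕ → ℝ) (n : ℕ) : ℝ := 1 + β n * ell n / n

/-- Window width `w_n = t_n / n`. -/
noncomputable def cutW (β : ℕ → ℝ) (n : ℕ) : ℝ := cutT β n / n

/-- Correction term `r_n = ℓ_n w_n`. -/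
noncomputable def cutR (β : ℕ → ℝ) (n : ℕ) : ℝ := ell n * cutW β n

section BarreraYcartAux
open Finset Set

lemma step_mvt {A ε p : ℝ} (hA : 0 < A) (hε : 0 < ε) (hp : 1 < p) {a : ℝ} (ha : 0 ≤ a) :
    (A + (a+1)*ε) ^ (-p) ≤ (-(A + (a+1)*ε) ^ (1-p) / ((p-1)*ε) - (-(A + a*ε) ^ (1-p) / ((p-1)*ε)))
    ∧ (-(A + (a+1)*ε) ^ (1-p) / ((p-1)*ε) - (-(A + a*ε) ^ (1-p) / ((p-1)*ε))) ≤ (A + a*ε) ^ (-p) := by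
  set F : ℝ → ℝ := fun u => -(A + u*ε) ^ (1-p) / ((p-1)*ε) with hF
  have hderiv : ∀ x ∈ Icc a (a+1), HasDerivAt F ((A + x*ε) ^ (-p)) x := by
    intro x hx
    have hxpos : 0 < A + x*ε := by nlinarith [hx.1]
    have h1 : HasDerivAt (fun u : ℝ => A + u*ε) ε x := by
      simpa [mul_comm] using ((hasDerivAt_id x).const_mul ε).const_add A
    have h2 : HasDerivAt (fun y : ℝ => y ^ (1-p)) ((1-p) * (A + x*ε) ^ (1-p-1)) (A + x*ε) :=
      Real.hasDerivAt_rpow_const (Or.inl hxpos.ne')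
    have h3 : HasDerivAt (fun u : ℝ => (A + u*ε) ^ (1-p)) ((1-p) * (A + x*ε) ^ (1-p-1) * ε) x :=
      by have := h2.comp x h1; exact this
    have h4 : HasDerivAt F (-((1-p) * (A + x*ε) ^ (1-p-1) * ε) / ((p-1)*ε)) x :=
      (h3.neg).div_const ((p-1)*ε)
    convert h4 using 1
    have : (1:ℝ)-p-1 = -p := by ring
    rw [this]
    have hne : (p-1)*ε ≠ 0 := mul_ne_zero (by linarith) hε.ne'
    have hp1 : p - 1 ≠ 0 := by linarith
    field_simp
    ring
  have hcont : ContinuousOn F (Icc a (a+1)) := fun x hx =>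
    ((hderiv x hx).continuousAt).continuousWithinAt
  obtain ⟨ξ, hξ, hslope⟩ := exists_hasDerivAt_eq_slope F (fun x => (A + x*ε) ^ (-p))
    (by linarith : a < a + 1) hcont (fun x hx => hderiv x ⟨hx.1.le, hx.2.le⟩)
  have hsl : F (a+1) - F a = (A + ξ*ε) ^ (-p) := by
    rw [hslope]; ring
  have hapos : 0 < A + a*ε := by nlinarith
  constructor
  · calc (A + (a+1)*ε) ^ (-p) ≤ (A + ξ*ε) ^ (-p) :=
        Real.rpow_le_rpow_of_nonpos (by nlinarith [hξ.1]) (by nlinarith [hξ.2]) (by linarith)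
      _ = F (a+1) - F a := hsl.symm
  · calc F (a+1) - F a = (A + ξ*ε) ^ (-p) := hsl
      _ ≤ (A + a*ε) ^ (-p) :=
        Real.rpow_le_rpow_of_nonpos hapos (by nlinarith [hξ.1]) (by linarith)

lemma sum_sandwich {A ε p : ℝ} (hA : 0 < A) (hε : 0 < ε) (hp : 1 < p) (K : ℕ) :
    ((A+ε) ^ (1-p) - (A+((K:ℝ)+1)*ε) ^ (1-p))/(p-1)
      ≤ ∑ j ∈ Finset.range K, ε * (A+((j:ℝ)+1)*ε) ^ (-p)
    ∧ ∑ j ∈ Finset.range K, ε * (A+((j:ℝ)+1)*ε) ^ (-p)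
      ≤ (A ^ (1-p) - (A+(K:ℝ)*ε) ^ (1-p))/(p-1) := by
  set F : ℝ → ℝ := fun u => -(A + u*ε) ^ (1-p) / ((p-1)*ε) with hF
  have hne : (p-1)*ε ≠ 0 := mul_ne_zero (by linarith) hε.ne'
  have hp1 : p - 1 ≠ 0 := by linarith
  have hεF : ∀ u : ℝ, ε * F u = -(A + u*ε) ^ (1-p) / (p-1) := by
    intro u; rw [hF]; field_simp
  constructor
  · have hlow : ∀ j ∈ Finset.range K,
        ε * F (((j:ℝ)+1)+1) - ε * F ((j:ℝ)+1) ≤ ε * (A+((j:ℝ)+1)*ε) ^ (-p) := by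
      intro j _
      have := (step_mvt hA hε hp (a := (j:ℝ)+1) (by positivity)).2
      nlinarith [this]
    calc ((A+ε) ^ (1-p) - (A+((K:ℝ)+1)*ε) ^ (1-p))/(p-1)
        = ∑ j ∈ Finset.range K, ((fun j : ℕ => ε * F ((j:ℝ)+1)) (j+1)
            - (fun j : ℕ => ε * F ((j:ℝ)+1)) j) := by
          rw [Finset.sum_range_sub (fun j : ℕ => ε * F ((j:ℝ)+1)) K]
          rw [hεF, hεF]
          norm_num
          ring
      _ ≤ ∑ j ∈ Finset.range K, ε * (A+((j:ℝ)+1)*ε) ^ (-p) := by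
          apply Finset.sum_le_sum
          intro j hj
          have h := hlow j hj
          simpa [Nat.cast_add, Nat.cast_one] using h
  · have hup : ∀ j ∈ Finset.range K,
        ε * (A+((j:ℝ)+1)*ε) ^ (-p) ≤ ε * F ((j:ℝ)+1) - ε * F (j:ℝ) := by
      intro j _
      have := (step_mvt hA hε hp (a := (j:ℝ)) (by positivity)).1
      nlinarith [this]
    calc ∑ j ∈ Finset.range K, ε * (A+((j:ℝ)+1)*ε) ^ (-p)
        ≤ ∑ j ∈ Finset.range K, ((fun j : ℕ => ε * F (j:ℝ)) (j+1)
            - (fun j : ℕ => ε * F (j:ℝ)) j) := by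
          apply Finset.sum_le_sum
          intro j hj
          have h := hup j hj
          simpa [Nat.cast_add, Nat.cast_one] using h
      _ = (A ^ (1-p) - (A+(K:ℝ)*ε) ^ (1-p))/(p-1) := by
          rw [Finset.sum_range_sub (fun j : ℕ => ε * F (j:ℝ)) K]
          rw [hεF, hεF]
          norm_num
          ring


lemma log_nat_pos {n : ℕ} (hn : 3 ≤ n) : 0 < Real.log n :=
  Real.log_pos (by exact_mod_cast Nat.lt_of_lt_of_le (by norm_num) hn)

lemma log_nat_lt {n : ℕ} (hn : 3 ≤ n) : Real.log n < n := by
  have h : (0:ℝ) < n := by positivity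
  have := Real.log_le_sub_one_of_pos h
  linarith

lemma ell_nonneg {n : ℕ} (hn : 3 ≤ n) : 0 ≤ ell n := by
  apply Real.log_nonneg
  rw [le_div_iff₀ (log_nat_pos hn)]
  simpa using (log_nat_lt hn).le

lemma one_le_log_nat {n : ℕ} (hn : 3 ≤ n) : 1 ≤ Real.log n := by
  rw [Real.le_log_iff_exp_le (by positivity)]
  have h3 : (3:ℝ) ≤ n := by exact_mod_cast hn
  have := Real.exp_one_lt_d9
  linarith

lemma ell_le_log {n : ℕ} (hn : 3 ≤ n) : ell n ≤ Real.log n := by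
  have hl := log_nat_pos hn
  have hn0 : (0:ℝ) < n := by positivity
  apply Real.log_le_log (div_pos hn0 hl)
  rw [div_le_iff₀ hl]
  nlinarith [one_le_log_nat hn]

lemma tendsto_log_nat : Tendsto (fun n : ℕ => Real.log n) atTop atTop :=
  Real.tendsto_log_atTop.comp tendsto_natCast_atTop_atTop

lemma tendsto_log_div_self : Tendsto (fun x : ℝ => Real.log x / x) atTop (𝓝 0) := by
  have := Real.tendsto_pow_log_div_mul_add_atTop 1 0 1 one_ne_zero
  simpa using this

lemma tendsto_loglog_div_log :
    Tendsto (fun n : ℕ => Real.log (Real.log n) / Real.log n) atTop (𝓝 0) :=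
  tendsto_log_div_self.comp tendsto_log_nat

lemma ell_eq {n : ℕ} (hn : 3 ≤ n) : ell n = Real.log n - Real.log (Real.log n) :=
  Real.log_div (by positivity) (log_nat_pos hn).ne'

lemma tendsto_ell_div_log : Tendsto (fun n : ℕ => ell n / Real.log n) atTop (𝓝 1) := by
  have h : Tendsto (fun n : ℕ => 1 - Real.log (Real.log n) / Real.log n) atTop (𝓝 1) := by
    simpa using (tendsto_const_nhds (x := (1:ℝ)) (f := atTop)).sub tendsto_loglog_div_log
  apply h.congr'
  filter_upwards [eventually_ge_atTop 3] with n hn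
  rw [ell_eq hn, sub_div, div_self (log_nat_pos hn).ne']

lemma tendsto_ell_atTop : Tendsto ell atTop atTop := by
  have h := Filter.Tendsto.pos_mul_atTop one_pos tendsto_ell_div_log tendsto_log_nat
  apply h.congr'
  filter_upwards [eventually_ge_atTop 3] with n hn
  field_simp [(log_nat_pos hn).ne']

lemma tendsto_log_div_nat : Tendsto (fun n : ℕ => Real.log n / n) atTop (𝓝 0) :=
  tendsto_log_div_self.comp tendsto_natCast_atTop_atTop

lemma tendsto_sq_log_div_nat : Tendsto (fun n : ℕ => (Real.log n)^2 / n) atTop (𝓝 0) := by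
  have := (Real.tendsto_pow_log_div_mul_add_atTop 1 0 2 one_ne_zero).comp
    (tendsto_natCast_atTop_atTop (R := ℝ))
  simpa [Function.comp_def] using this

noncomputable def dlt (β : ℕ → ℝ) (c : ℝ) (n : ℕ) : ℝ :=
  ell n + c + β n * ell n * ((1 - β n) * ell n + c) / n

section dltLemmas
variable (β : ℕ → ℝ) (hβ : ∀ n, β n ∈ Set.Icc (0:ℝ) 1) (c : ℝ)
include hβ

lemma tendsto_E : Tendsto (fun n => β n * ell n * ((1 - β n) * ell n + c) / n)
    atTop (𝓝 0) := by
  apply squeeze_zero_norm' (a := fun n : ℕ => (Real.log n)^2 / n + |c| * (Real.log n / n))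
  · filter_upwards [eventually_ge_atTop 3] with n hn
    have h1 := (hβ n).1; have h2 := (hβ n).2
    have h3 := ell_nonneg hn; have h4 := ell_le_log hn
    have hn0 : (0:ℝ) < n := by positivity
    have habs : |β n * ell n * ((1 - β n) * ell n + c) / n|
        ≤ (Real.log n * Real.log n + |c| * Real.log n) / n := by
      rw [abs_div, abs_of_pos hn0, div_le_div_iff_of_pos_right hn0]
      calc |β n * ell n * ((1 - β n) * ell n + c)|
          ≤ |β n * ell n| * |(1 - β n) * ell n + c| := by rw [abs_mul]
        _ ≤ Real.log n * (Real.log n + |c|) := by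
            apply mul_le_mul
            · rw [abs_mul, abs_of_nonneg h1, abs_of_nonneg h3]
              nlinarith
            · calc |(1 - β n) * ell n + c| ≤ |(1 - β n) * ell n| + |c| := abs_add_le _ _
                _ ≤ Real.log n + |c| := by
                    rw [abs_mul, abs_of_nonneg (by linarith), abs_of_nonneg h3]
                    nlinarith
            · positivity
            · positivity
        _ = Real.log n * Real.log n + |c| * Real.log n := by ring
    calc ‖β n * ell n * ((1 - β n) * ell n + c) / n‖
        = |β n * ell n * ((1 - β n) * ell n + c) / n| := rfl
      _ ≤ (Real.log n * Real.log n + |c| * Real.log n) / n := habs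
      _ = (Real.log n)^2 / n + |c| * (Real.log n / n) := by ring
  · simpa using tendsto_sq_log_div_nat.add (tendsto_log_div_nat.const_mul |c|)

lemma tendsto_dlt_div_log :
    Tendsto (fun n => dlt β c n / Real.log n) atTop (𝓝 1) := by
  have h : Tendsto (fun n : ℕ => ell n / Real.log n
      + (c + β n * ell n * ((1 - β n) * ell n + c) / n) / Real.log n) atTop (𝓝 1) := by
    have h2 : Tendsto (fun n : ℕ => c + β n * ell n * ((1 - β n) * ell n + c) / n)
        atTop (𝓝 c) := by simpa using (tendsto_const_nhds (x := c) (f := atTop)).add (tendsto_E β hβ c)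
    simpa using tendsto_ell_div_log.add (h2.div_atTop tendsto_log_nat)
  apply h.congr
  intro n; rw [dlt]; ring

lemma tendsto_dlt_atTop : Tendsto (dlt β c) atTop atTop := by
  have h := Filter.Tendsto.pos_mul_atTop one_pos (tendsto_dlt_div_log β hβ c) tendsto_log_nat
  apply h.congr'
  filter_upwards [eventually_ge_atTop 3] with n hn
  field_simp [(log_nat_pos hn).ne']

lemma tendsto_dlt_div_nat : Tendsto (fun n => dlt β c n / n) atTop (𝓝 0) := by
  have h := (tendsto_dlt_div_log β hβ c).mul tendsto_log_div_nat
  rw [mul_zero] at h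
  apply h.congr'
  filter_upwards [eventually_ge_atTop 3] with n hn
  field_simp [(log_nat_pos hn).ne']

end dltLemmas

lemma exp_neg_ell {n : ℕ} (hn : 3 ≤ n) : Real.exp (-ell n) = Real.log n / n := by
  rw [ell, Real.exp_neg, Real.exp_log (div_pos (by positivity) (log_nat_pos hn)), inv_div]

section mainTerm
variable (β : ℕ → ℝ) (hβ : ∀ n, β n ∈ Set.Icc (0:ℝ) 1) (c : ℝ)
include hβ

lemma tendsto_main :
    Tendsto (fun n : ℕ => n * Real.exp (-dlt β c n) / dlt β c n) atTop (𝓝 (Real.exp (-c))) := by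
  have hE := tendsto_E β hβ c
  have hlogdlt : Tendsto (fun n : ℕ => Real.log n / dlt β c n) atTop (𝓝 1) := by
    have h := (tendsto_dlt_div_log β hβ c).inv₀ one_ne_zero
    rw [inv_one] at h
    apply h.congr
    intro n; rw [inv_div]
  have hexp : Tendsto (fun n : ℕ => Real.exp (-(c + β n * ell n * ((1 - β n) * ell n + c) / n)))
      atTop (𝓝 (Real.exp (-c))) := by
    have : Tendsto (fun n : ℕ => -(c + β n * ell n * ((1 - β n) * ell n + c) / n))
        atTop (𝓝 (-c)) := by
      simpa using ((tendsto_const_nhds (x := c) (f := atTop)).add hE).neg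
    exact (Real.continuous_exp.continuousAt.tendsto).comp this
  have h := hexp.mul hlogdlt
  rw [mul_one] at h
  apply h.congr'
  filter_upwards [eventually_ge_atTop 3] with n hn
  have hn0 : (0:ℝ) < n := by positivity
  have hsplit : Real.exp (-dlt β c n) = Real.log n / n *
      (Real.exp (-c) * Real.exp (-(β n * ell n * ((1 - β n) * ell n + c) / n))) := by
    rw [show -dlt β c n = -ell n + (-c + -(β n * ell n * ((1 - β n) * ell n + c) / n)) by
      rw [dlt]; ring, Real.exp_add, Real.exp_add, exp_neg_ell hn]
  rw [hsplit, show -(c + β n * ell n * ((1 - β n) * ell n + c) / ↑n)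
    = -c + -(β n * ell n * ((1 - β n) * ell n + c) / ↑n) by ring, Real.exp_add]
  field_simp

lemma tendsto_tail {lam : ℝ} (hlam : 1 < lam) :
    Tendsto (fun n : ℕ => n * Real.exp (-(lam * dlt β c n)) / dlt β c n) atTop (𝓝 0) := by
  set μ : ℝ := (1 + lam)/2 with hμ
  have hμ1 : 1 < μ := by rw [hμ]; linarith
  have hμlam : μ < lam := by rw [hμ]; linarith
  apply squeeze_zero_norm' (a := fun n : ℕ => (n:ℝ) ^ (1 - μ))
  · have hev1 : ∀ᶠ n : ℕ in atTop, μ / lam ≤ dlt β c n / Real.log n :=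
      (tendsto_dlt_div_log β hβ c).eventually (eventually_ge_nhds
        (by rw [div_lt_one (by linarith)]; exact hμlam))
    have hev2 : ∀ᶠ n : ℕ in atTop, 1 ≤ dlt β c n := (tendsto_dlt_atTop β hβ c).eventually_ge_atTop 1
    filter_upwards [hev1, hev2, eventually_ge_atTop 3] with n h1 h2 hn
    have hn0 : (0:ℝ) < n := by positivity
    have hlog := log_nat_pos hn
    have hmu_log : μ * Real.log n ≤ lam * dlt β c n := by
      rw [div_le_div_iff₀ (by linarith) hlog] at h1
      nlinarith
    have hbound : (n:ℝ) * Real.exp (-(lam * dlt β c n)) / dlt β c n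
        ≤ (n:ℝ) * Real.exp (-(μ * Real.log n)) := by
      calc (n:ℝ) * Real.exp (-(lam * dlt β c n)) / dlt β c n
          ≤ (n:ℝ) * Real.exp (-(lam * dlt β c n)) / 1 :=
            div_le_div_of_nonneg_left (by positivity) one_pos h2
        _ = (n:ℝ) * Real.exp (-(lam * dlt β c n)) := div_one _
        _ ≤ (n:ℝ) * Real.exp (-(μ * Real.log n)) := by
            apply mul_le_mul_of_nonneg_left _ hn0.le
            exact Real.exp_le_exp.mpr (by linarith)
    have hval : (n:ℝ) * Real.exp (-(μ * Real.log n)) = (n:ℝ) ^ (1 - μ) := by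
      rw [show -(μ * Real.log n) = Real.log n * (-μ) by ring, ← Real.rpow_def_of_pos hn0,
        show (1:ℝ) - μ = 1 + (-μ) by ring, Real.rpow_add hn0, Real.rpow_one]
    rw [Real.norm_eq_abs, abs_of_nonneg (by positivity)]
    rw [hval] at hbound; exact hbound
  · have h := (tendsto_rpow_neg_atTop (y := μ - 1) (by linarith)).comp
      (tendsto_natCast_atTop_atTop (R := ℝ))
    apply h.congr
    intro n; simp [Function.comp, show -(μ-1) = 1-μ by ring]

end mainTerm

lemma hlam9 : (1:ℝ) < Real.log 9 - 1 := by
  have he2 : Real.exp 2 = Real.exp 1 * Real.exp 1 := by rw [← Real.exp_add]; norm_num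
  have h2 : Real.exp 2 < 9 := by nlinarith [Real.exp_one_lt_d9, Real.exp_pos 1]
  have : (2:ℝ) < Real.log 9 := (Real.lt_log_iff_exp_lt (by norm_num)).mpr h2
  linarith

section bigsum
variable (β : ℕ → ℝ) (hβ : ∀ n, β n ∈ Set.Icc (0:ℝ) 1) (c : ℝ)
include hβ

lemma tendsto_sum_aux :
    Tendsto (fun n : ℕ => ∑ j ∈ Finset.range (9^n - 1),
      Real.exp (-(n:ℝ)) * (Real.exp (n:ℝ) + ((j:ℝ)+1) * Real.exp (-(n:ℝ)))
        ^ (-(1 + dlt β c n / (n:ℝ))))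
      atTop (𝓝 (Real.exp (-c))) := by
  set lam := Real.log 9 - 1 with hlamdef
  have hlam : (1:ℝ) < lam := hlam9
  have hmain := tendsto_main β hβ c
  have htail := tendsto_tail β hβ c hlam
  have hdpos : ∀ᶠ n : ℕ in atTop, 0 < dlt β c n := (tendsto_dlt_atTop β hβ c).eventually_gt_atTop 0
  -- the A-term
  have hA : Tendsto (fun n : ℕ => Real.exp (n:ℝ) ^ (1 - (1 + dlt β c n / n))
      / ((1 + dlt β c n / n) - 1)) atTop (𝓝 (Real.exp (-c))) := by
    apply hmain.congr'
    filter_upwards [hdpos, eventually_ge_atTop 3] with n hd hn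
    have hn0 : (0:ℝ) < n := by positivity
    rw [Real.rpow_def_of_pos (Real.exp_pos _), Real.log_exp,
      show (n:ℝ) * (1 - (1 + dlt β c n / n)) = -dlt β c n by field_simp; ring,
      show (1 + dlt β c n / n) - 1 = dlt β c n / n by ring]
    field_simp
  -- the correction factor for the lower bound
  have hexp2n : Tendsto (fun n : ℕ => Real.exp (-(2*(n:ℝ)))) atTop (𝓝 0) := by
    apply Real.tendsto_exp_atBot.comp
    apply tendsto_neg_atTop_atBot.comp
    exact (tendsto_natCast_atTop_atTop (R := ℝ)).const_mul_atTop two_pos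
  have hpm1 : Tendsto (fun n : ℕ => 1 - (1 + dlt β c n / n)) atTop (𝓝 0) := by
    have := (tendsto_dlt_div_nat β hβ c).neg
    rw [neg_zero] at this
    exact this.congr (fun n => by ring)
  have hfac : Tendsto (fun n : ℕ => (1 + Real.exp (-(2*(n:ℝ))))
      ^ (1 - (1 + dlt β c n / n))) atTop (𝓝 1) := by
    have hb : Tendsto (fun n : ℕ => 1 + Real.exp (-(2*(n:ℝ)))) atTop (𝓝 1) := by
      simpa using (tendsto_const_nhds (x := (1:ℝ)) (f := atTop)).add hexp2n
    simpa using hb.rpow hpm1 (Or.inl one_ne_zero)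
  have hAe : Tendsto (fun n : ℕ => (Real.exp (n:ℝ) + Real.exp (-(n:ℝ)))
      ^ (1 - (1 + dlt β c n / n)) / ((1 + dlt β c n / n) - 1)) atTop (𝓝 (Real.exp (-c))) := by
    have h := hA.mul hfac
    rw [mul_one] at h
    apply h.congr'
    filter_upwards [eventually_ge_atTop 3] with n hn
    have hAε : Real.exp (n:ℝ) + Real.exp (-(n:ℝ))
        = Real.exp (n:ℝ) * (1 + Real.exp (-(2*(n:ℝ)))) := by
      rw [mul_add, mul_one, ← Real.exp_add]
      congr 2
      ring_nf
    rw [hAε, Real.mul_rpow (Real.exp_pos _).le (by positivity)]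
    ring
  -- tail bounds
  have h9exp : ∀ n : ℕ, Real.exp (lam * n) = (9:ℝ)^n * Real.exp (-(n:ℝ)) := by
    intro n
    rw [hlamdef, show (Real.log 9 - 1) * (n:ℝ) = (n:ℝ) * Real.log 9 + -(n:ℝ) by ring,
      Real.exp_add, ← Real.log_pow, Real.exp_log (by positivity)]
  have hcast : ∀ n : ℕ, ((9^n - 1 : ℕ):ℝ) = (9:ℝ)^n - 1 := by
    intro n
    rw [Nat.cast_sub (Nat.one_le_pow _ _ (by norm_num))]
    push_cast
    ring
  have htail_gen : ∀ (b : ℕ → ℝ), (∀ n : ℕ, 3 ≤ n → Real.exp (lam * n) ≤ b n ∧ 0 < b n) →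
      Tendsto (fun n : ℕ => b n ^ (1 - (1 + dlt β c n / n)) / ((1 + dlt β c n / n) - 1))
        atTop (𝓝 0) := by
    intro b hb
    apply squeeze_zero_norm' (a := fun n : ℕ => n * Real.exp (-(lam * dlt β c n)) / dlt β c n)
    · filter_upwards [hdpos, eventually_ge_atTop 3] with n hd hn
      have hn0 : (0:ℝ) < n := by positivity
      have hp1 : (0:ℝ) < (1 + dlt β c n / n) - 1 := by
        rw [show (1 + dlt β c n / n) - 1 = dlt β c n / n by ring]
        positivity
      have hpneg : 1 - (1 + dlt β c n / n) ≤ 0 := by linarith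
      obtain ⟨hble, hbpos⟩ := hb n hn
      have h1 : b n ^ (1 - (1 + dlt β c n / n)) ≤ Real.exp (lam * n) ^ (1 - (1 + dlt β c n / n)) :=
        Real.rpow_le_rpow_of_nonpos (Real.exp_pos _) hble hpneg
      have h2 : Real.exp (lam * n) ^ (1 - (1 + dlt β c n / n)) = Real.exp (-(lam * dlt β c n)) := by
        rw [Real.rpow_def_of_pos (Real.exp_pos _), Real.log_exp]
        congr 1
        field_simp
        ring
      have hnonneg : 0 ≤ b n ^ (1 - (1 + dlt β c n / n)) / ((1 + dlt β c n / n) - 1) :=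
        div_nonneg (Real.rpow_nonneg hbpos.le _) hp1.le
      rw [Real.norm_eq_abs, abs_of_nonneg hnonneg]
      calc b n ^ (1 - (1 + dlt β c n / n)) / ((1 + dlt β c n / n) - 1)
          ≤ Real.exp (-(lam * dlt β c n)) / ((1 + dlt β c n / n) - 1) := by
            rw [← h2]; gcongr
        _ = n * Real.exp (-(lam * dlt β c n)) / dlt β c n := by
            rw [show (1 + dlt β c n / n) - 1 = dlt β c n / n by ring]
            field_simp
    · exact htail
  have htailK : Tendsto (fun n : ℕ => (Real.exp (n:ℝ) + ((9^n - 1 : ℕ):ℝ) * Real.exp (-(n:ℝ)))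
      ^ (1 - (1 + dlt β c n / n)) / ((1 + dlt β c n / n) - 1)) atTop (𝓝 0) := by
    apply htail_gen
    intro n hn
    constructor
    · rw [h9exp, hcast]
      have := Real.exp_le_exp.mpr (show -(n:ℝ) ≤ (n:ℝ) by
        have : (0:ℝ) ≤ n := by positivity
        linarith)
      nlinarith [Real.exp_pos (-(n:ℝ))]
    · positivity
  have htailK1 : Tendsto (fun n : ℕ => (Real.exp (n:ℝ) + (((9^n - 1 : ℕ):ℝ)+1) * Real.exp (-(n:ℝ)))
      ^ (1 - (1 + dlt β c n / n)) / ((1 + dlt β c n / n) - 1)) atTop (𝓝 0) := by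
    apply htail_gen
    intro n hn
    constructor
    · rw [h9exp, hcast]
      have := Real.exp_pos (n:ℝ)
      nlinarith
    · positivity
  -- squeeze
  have hupper := hA.sub htailK
  rw [sub_zero] at hupper
  have hlower := hAe.sub htailK1
  rw [sub_zero] at hlower
  apply tendsto_of_tendsto_of_tendsto_of_le_of_le' hlower hupper
  · filter_upwards [hdpos, eventually_ge_atTop 3] with n hd hn
    have hn0 : (0:ℝ) < n := by positivity
    have hp : 1 < 1 + dlt β c n / n := by nlinarith [div_pos hd hn0]
    have h := (sum_sandwich (Real.exp_pos (n:ℝ)) (Real.exp_pos (-(n:ℝ))) hp (9^n - 1)).1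
    rw [sub_div] at h
    exact h
  · filter_upwards [hdpos, eventually_ge_atTop 3] with n hd hn
    have hn0 : (0:ℝ) < n := by positivity
    have hp : 1 < 1 + dlt β c n / n := by nlinarith [div_pos hd hn0]
    have h := (sum_sandwich (Real.exp_pos (n:ℝ)) (Real.exp_pos (-(n:ℝ))) hp (9^n - 1)).2
    rw [sub_div] at h
    exact h

end bigsum

lemma sum_rewrite (n : ℕ) (t : ℝ) :
    (∑ i ∈ Finset.Icc (2:ℕ) (9^n), Real.exp (-(n:ℝ)) *
        Real.exp (-Real.log (Real.exp (n:ℝ) + ((i:ℝ) - 1) * Real.exp (-(n:ℝ))) * t))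
      = ∑ j ∈ Finset.range (9^n - 1),
        Real.exp (-(n:ℝ)) * (Real.exp (n:ℝ) + ((j:ℝ)+1) * Real.exp (-(n:ℝ))) ^ (-t) := by
  rw [← Finset.Ico_add_one_right_eq_Icc, Finset.sum_Ico_eq_sum_range]
  rw [show 9^n + 1 - 2 = 9^n - 1 from by omega]
  apply Finset.sum_congr rfl
  intro j _
  have h1 : ((2+j:ℕ):ℝ) - 1 = (j:ℝ)+1 := by push_cast; ring
  rw [h1, Real.rpow_def_of_pos (by positivity)]
  congr 1
  ring_nf

lemma tendsto_first (β : ℕ → ℝ) (hβ : ∀ n, β n ∈ Set.Icc (0:ℝ) 1) (γ : ℝ≥0∞)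
    (hγ : Tendsto (fun n => ENNReal.ofReal ((1 - β n) * ell n)) atTop (𝓝 γ)) :
    Tendsto (fun n => Real.exp (-((1 - β n) * ell n))) atTop
      (𝓝 (if γ = ⊤ then 0 else Real.exp (-γ.toReal))) := by
  by_cases hne : γ = ⊤
  · subst hne
    simp only [if_pos rfl]
    apply Real.tendsto_exp_atBot.comp
    apply tendsto_neg_atTop_atBot.comp
    rw [tendsto_atTop]
    intro b
    have hmem : Set.Ioi (ENNReal.ofReal (max b 0)) ∈ 𝓝 (⊤ : ℝ≥0∞) :=
      Ioi_mem_nhds ENNReal.ofReal_lt_top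
    filter_upwards [hγ.eventually hmem] with n hn
    by_contra hcon
    push_neg at hcon
    have : ENNReal.ofReal ((1 - β n) * ell n) ≤ ENNReal.ofReal (max b 0) :=
      ENNReal.ofReal_le_ofReal (le_trans hcon.le (le_max_left _ _))
    exact absurd hn (not_lt.mpr this)
  · simp only [if_neg hne]
    have h := (ENNReal.tendsto_toReal hne).comp hγ
    have h2 : Tendsto (fun n => (1 - β n) * ell n) atTop (𝓝 γ.toReal) := by
      apply h.congr'
      filter_upwards [eventually_ge_atTop 3] with n hn
      simp only [Function.comp]
      rw [ENNReal.toReal_ofReal (mul_nonneg (by linarith [(hβ n).2]) (ell_nonneg hn))]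
    exact (Real.continuous_exp.continuousAt.tendsto).comp (h2.neg)

theorem lemma_betan_aux (β : ℕ → ℝ) (hβ : ∀ n, β n ∈ Set.Icc (0:ℝ) 1) (γ : ℝ≥0∞)
    (hγ : Tendsto (fun n => ENNReal.ofReal ((1 - β n) * ell n)) atTop (𝓝 γ)) (c : ℝ) :
    Tendsto (fun n => dCut β n (cutT β n + (1 - β n) * cutR β n + c * cutW β n))
      atTop
      (𝓝 (Real.exp (-c) * (1 + if γ = ⊤ then 0 else Real.exp (-γ.toReal)))) := by
  set G := if γ = ⊤ then (0:ℝ) else Real.exp (-γ.toReal) with hG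
  have hfirst := tendsto_first β hβ γ hγ
  have hsum := tendsto_sum_aux β hβ c
  have h1 : Tendsto (fun n => Real.exp (-c) * Real.exp (-((1 - β n) * ell n))) atTop
      (𝓝 (Real.exp (-c) * G)) := hfirst.const_mul _
  have h := h1.add hsum
  rw [show Real.exp (-c) * (1 + G) = Real.exp (-c) * G + Real.exp (-c) by ring]
  apply h.congr'
  filter_upwards [eventually_ge_atTop 3] with n hn
  have hn0 : (0:ℝ) < n := by positivity
  have hb0 := (hβ n).1
  have hb1 := (hβ n).2
  have hL := ell_nonneg hn
  have ht : (0:ℝ) < 1 + β n / n * ell n := by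
    have : 0 ≤ β n / n * ell n := mul_nonneg (div_nonneg hb0 hn0.le) hL
    linarith
  have hsB : cutT β n + (1 - β n) * cutR β n + c * cutW β n = 1 + dlt β c n / n := by
    simp only [cutT, cutR, cutW, dlt]
    field_simp
    ring
  rw [hsB, dCut, sum_rewrite n (1 + dlt β c n / n)]
  congr 1
  rw [← Real.exp_add, ← Real.exp_add]
  congr 1
  rw [dlt]
  field_simp
  ring

/-- Lemma 1 of Barrera–Ycart: if `γ = lim (1-β_n) ℓ_n` exists in `[0, ∞]`, then
for every real `c`, `d_n(t_n + (1-β_n) r_n + c w_n) → e^{-c} (1 + e^{-γ})`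
(with the convention `e^{-∞} = 0`). -/
theorem lemma_betan
    (β : ℕ → ℝ) (hβ : ∀ n, β n ∈ Set.Icc (0 : ℝ) 1)
    (γ : ℝ≥0∞)
    (hγ : Tendsto (fun n => ENNReal.ofReal ((1 - β n) * ell n)) atTop (𝓝 γ))
    (c : ℝ) :
    Tendsto (fun n => dCut β n (cutT β n + (1 - β n) * cutR β n + c * cutW β n))
      atTop
      (𝓝 (Real.exp (-c) * (1 + if γ = ⊤ then 0 else Real.exp (-γ.toReal)))) := by
  exact lemma_betan_aux β hβ γ hγ c

end BarreraYcartAux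
end

section
/- For every real c, lim_{n → ∞} Σ_{i=2}^{m_n} e^{−n}·(e^n + (i−1)·e^{−n})^{−(1 + ℓ_n/n + c/n)} = e^{−c}. -/
open Filter Real
open scoped Topology

namespace SecondTermAux

noncomputable def qf (c : ℝ) (n : ℕ) : ℝ := (ell n + c) / n

noncomputable def Up (c : ℝ) (n : ℕ) : ℝ :=
  (Real.exp n ^ (-(qf c n))
    - (Real.exp n + ((9:ℝ)^n - 1) * Real.exp (-(n:ℝ))) ^ (-(qf c n))) / qf c n

noncomputable def Lo (c : ℝ) (n : ℕ) : ℝ :=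
  ((Real.exp n + Real.exp (-(n:ℝ))) ^ (-(qf c n))
    - (Real.exp n + (9:ℝ)^n * Real.exp (-(n:ℝ))) ^ (-(qf c n))) / qf c n

lemma integ_aux (r s a b p : ℝ) (hr : 0 < r) (hpos : 0 < s + a * r) (hab : a ≤ b)
    (hp : p ≠ 1) :
    ∫ t in a..b, r * (s + t * r) ^ (-p) =
      ((s + a * r) ^ (1 - p) - (s + b * r) ^ (1 - p)) / (p - 1) := by
  have hposx : ∀ x ∈ Set.uIcc a b, 0 < s + x * r := by
    intro x hx
    rw [Set.uIcc_of_le hab] at hx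
    have : a * r ≤ x * r := mul_le_mul_of_nonneg_right hx.1 hr.le
    linarith
  have hderiv : ∀ x ∈ Set.uIcc a b,
      HasDerivAt (fun t => -(s + t * r) ^ (1 - p) / (p - 1)) (r * (s + x * r) ^ (-p)) x := by
    intro x hx
    have hx0 := hposx x hx
    have h1 : HasDerivAt (fun t : ℝ => s + t * r) r x := by
      simpa using ((hasDerivAt_id x).mul_const r).const_add s
    have h2 : HasDerivAt (fun t : ℝ => (s + t * r) ^ (1 - p))
        ((1 - p) * (s + x * r) ^ (1 - p - 1) * r) x := by
      exact (Real.hasDerivAt_rpow_const (Or.inl hx0.ne')).comp x h1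
    have h3 := (h2.neg).div_const (p - 1)
    refine h3.congr_deriv ?_
    have hp1 : p - 1 ≠ 0 := sub_ne_zero.mpr hp
    rw [show 1 - p - 1 = -p by ring, div_eq_iff hp1]
    ring
  have hcont : IntervalIntegrable (fun t => r * (s + t * r) ^ (-p)) MeasureTheory.volume a b := by
    apply ContinuousOn.intervalIntegrable
    apply ContinuousOn.mul continuousOn_const
    apply ContinuousOn.rpow_const
    · fun_prop
    · intro x hx; exact Or.inl (hposx x hx).ne'
  rw [intervalIntegral.integral_eq_sub_of_hasDerivAt (fun x hx => hderiv x hx) hcont]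
  ring

lemma ell_eq (n : ℕ) (hn : 2 ≤ n) : ell n = Real.log n - Real.log (Real.log n) := by
  have h1 : (1:ℝ) < n := by exact_mod_cast Nat.lt_of_lt_of_le one_lt_two hn
  have h2 : 0 < Real.log n := Real.log_pos h1
  exact Real.log_div (by positivity) h2.ne'

lemma loglog_div_log : Tendsto (fun n : ℕ => Real.log (Real.log n) / Real.log n) atTop (𝓝 0) := by
  have h0 : Tendsto (fun x : ℝ => Real.log x / x) atTop (𝓝 0) :=
    Real.isLittleO_log_id_atTop.tendsto_div_nhds_zero
  have h1 : Tendsto (fun n : ℕ => Real.log n) atTop atTop :=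
    Real.tendsto_log_atTop.comp tendsto_natCast_atTop_atTop
  exact h0.comp h1

lemma ell_div_log : Tendsto (fun n : ℕ => ell n / Real.log n) atTop (𝓝 1) := by
  have h := (tendsto_const_nhds (x := (1:ℝ))).sub loglog_div_log
  rw [sub_zero] at h
  apply h.congr'
  filter_upwards [eventually_ge_atTop 2] with n hn
  have h1 : (1:ℝ) < n := by exact_mod_cast Nat.lt_of_lt_of_le one_lt_two hn
  have h2 : 0 < Real.log n := Real.log_pos h1
  rw [ell_eq n hn, sub_div, div_self h2.ne']

lemma ell_atTop : Tendsto ell atTop atTop := by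
  have h1 : Tendsto (fun n : ℕ => Real.log n) atTop atTop :=
    Real.tendsto_log_atTop.comp tendsto_natCast_atTop_atTop
  have h2 : ∀ᶠ n : ℕ in atTop, Real.log n / 2 ≤ ell n := by
    have hh : ∀ᶠ n : ℕ in atTop, Real.log (Real.log n) / Real.log n ≤ 1/2 := by
      have := loglog_div_log.eventually (eventually_le_nhds (by norm_num : (0:ℝ) < 1/2))
      exact this
    filter_upwards [hh, eventually_ge_atTop 2] with n hn h2n
    have h1 : (1:ℝ) < n := by exact_mod_cast Nat.lt_of_lt_of_le one_lt_two h2n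
    have hl : 0 < Real.log n := Real.log_pos h1
    rw [ell_eq n h2n]
    have : Real.log (Real.log n) ≤ Real.log n / 2 := by
      have := (div_le_iff₀ hl).mp hn
      linarith
    linarith
  exact tendsto_atTop_mono' _ h2 (h1.atTop_div_const two_pos)

lemma log_div_ell_add (c : ℝ) :
    Tendsto (fun n : ℕ => Real.log n / (ell n + c)) atTop (𝓝 1) := by
  have h1 : Tendsto (fun n : ℕ => ell n / Real.log n + c / Real.log n) atTop (𝓝 1) := by
    have h2 : Tendsto (fun n : ℕ => c / Real.log n) atTop (𝓝 0) :=
      tendsto_const_nhds.div_atTop (Real.tendsto_log_atTop.comp tendsto_natCast_atTop_atTop)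
    simpa using ell_div_log.add h2
  have h3 := (h1.inv₀ one_ne_zero)
  rw [inv_one] at h3
  apply h3.congr'
  filter_upwards [eventually_ge_atTop 2, (ell_atTop.eventually_ge_atTop (1 - c)),
    ell_atTop.eventually_ge_atTop 1] with n hn he he1
  have h1' : (1:ℝ) < n := by exact_mod_cast Nat.lt_of_lt_of_le one_lt_two hn
  have hl : 0 < Real.log n := Real.log_pos h1'
  have hec : 0 < ell n + c := by linarith
  rw [eq_comm]
  field_simp

lemma q_to_zero (c : ℝ) : Tendsto (fun n : ℕ => (ell n + c) / n) atTop (𝓝 0) := by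
  have h0 : Tendsto (fun x : ℝ => Real.log x / x) atTop (𝓝 0) :=
    Real.isLittleO_log_id_atTop.tendsto_div_nhds_zero
  have h1 : Tendsto (fun n : ℕ => Real.log n / n) atTop (𝓝 0) :=
    h0.comp tendsto_natCast_atTop_atTop
  have h2 : Tendsto (fun n : ℕ => c / n) atTop (𝓝 0) :=
    tendsto_const_nhds.div_atTop tendsto_natCast_atTop_atTop
  have h3 := h1.add h2
  rw [add_zero] at h3
  apply squeeze_zero' ?_ ?_ h3
  · filter_upwards [eventually_ge_atTop 3, ell_atTop.eventually_ge_atTop (-c)] with n hn he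
    have : (0:ℝ) ≤ ell n + c := by linarith
    positivity
  · filter_upwards [eventually_ge_atTop 3] with n hn
    have h1' : (1:ℝ) < n := by exact_mod_cast Nat.lt_of_lt_of_le (by norm_num) hn
    have hl : 0 < Real.log n := Real.log_pos h1'
    have hn0 : (0:ℝ) < n := by linarith
    have : ell n ≤ Real.log n := by
      rw [ell_eq n (by omega)]
      have hl1 : 1 ≤ Real.log 3 := by
        rw [Real.le_log_iff_exp_le (by norm_num)]
        exact (Real.exp_one_lt_d9.le.trans (by norm_num))
      have : 1 ≤ Real.log n := hl1.trans (Real.log_le_log (by norm_num) (by exact_mod_cast hn))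
      have := Real.log_nonneg this
      linarith
    rw [← add_div]
    gcongr

lemma exp_neg_ell (n : ℕ) (hn : 2 ≤ n) : Real.exp (-ell n) = Real.log n / n := by
  have h1 : (1:ℝ) < n := by exact_mod_cast Nat.lt_of_lt_of_le one_lt_two hn
  have h2 : 0 < Real.log n := Real.log_pos h1
  rw [ell, ← Real.log_inv, Real.exp_log (by positivity), inv_div]

lemma tailbound (c : ℝ) :
    Tendsto (fun n : ℕ => Real.exp (-(ell n + c) * Real.log 3) * n / (ell n + c))
      atTop (𝓝 0) := by
  have hl3 : 1 < Real.log 3 := by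
    rw [Real.lt_log_iff_exp_lt (by norm_num)]
    calc Real.exp 1 < 2.7182818286 := Real.exp_one_lt_d9
    _ < 3 := by norm_num
  have hA : Tendsto (fun x : ℝ => Real.log x ^ Real.log 3 / x ^ (Real.log 3 - 1)) atTop (𝓝 0) :=
    (isLittleO_log_rpow_rpow_atTop (Real.log 3) (by linarith)).tendsto_div_nhds_zero
  have hAn := hA.comp tendsto_natCast_atTop_atTop
  have hB : Tendsto (fun n : ℕ => (ell n + c)⁻¹) atTop (𝓝 0) := by
    have := (tendsto_atTop_add_const_right atTop c ell_atTop)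
    exact this.inv_tendsto_atTop
  have key := ((hAn.mul hB).const_mul (Real.exp (-c * Real.log 3)))
  rw [mul_zero, mul_zero] at key
  apply key.congr'
  filter_upwards [eventually_ge_atTop 2, ell_atTop.eventually_gt_atTop (-c)] with n hn he
  have h1 : (1:ℝ) < n := by exact_mod_cast Nat.lt_of_lt_of_le one_lt_two hn
  have hn0 : (0:ℝ) < n := by linarith
  have hl : 0 < Real.log n := Real.log_pos h1
  have hec : 0 < ell n + c := by linarith
  have e2 : Real.exp (-ell n * Real.log 3) = (Real.log n / n) ^ Real.log 3 := by
    rw [Real.exp_mul, exp_neg_ell n hn]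
  have e1 : Real.exp (-(ell n + c) * Real.log 3)
      = Real.exp (-c * Real.log 3) * (Real.log n / n) ^ Real.log 3 := by
    rw [show -(ell n + c) * Real.log 3 = -c * Real.log 3 + -ell n * Real.log 3 by ring,
      Real.exp_add, e2]
  simp only [Function.comp]
  have hnl : (0:ℝ) < (n:ℝ) ^ Real.log 3 := Real.rpow_pos_of_pos hn0 _
  rw [e1, Real.div_rpow hl.le hn0.le, Real.rpow_sub hn0, Real.rpow_one]
  field_simp

lemma tail (c : ℝ) (B : ℕ → ℝ) (hB : ∀ᶠ n : ℕ in atTop, (3:ℝ) ^ n ≤ B n) :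
    Tendsto (fun n : ℕ => B n ^ (-(qf c n)) / qf c n) atTop (𝓝 0) := by
  apply squeeze_zero' ?_ ?_ (tailbound c)
  · filter_upwards [hB, ell_atTop.eventually_gt_atTop (-c), eventually_ge_atTop 1] with n hb he h1
    have h3 : (0:ℝ) < 3 ^ n := by positivity
    have hq : 0 < qf c n := by
      have : (0:ℝ) < n := by exact_mod_cast h1
      exact div_pos (by linarith) this
    exact div_nonneg (Real.rpow_nonneg (le_of_lt (lt_of_lt_of_le h3 hb)) _) hq.le
  · filter_upwards [hB, ell_atTop.eventually_gt_atTop (-c), eventually_ge_atTop 1] with n hb he h1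
    have hn0 : (0:ℝ) < n := by exact_mod_cast h1
    have hec : 0 < ell n + c := by linarith
    have hq : 0 < qf c n := div_pos hec hn0
    have h3 : (0:ℝ) < 3 ^ n := by positivity
    have step1 : B n ^ (-(qf c n)) ≤ ((3:ℝ) ^ n) ^ (-(qf c n)) :=
      Real.rpow_le_rpow_of_nonpos h3 hb (neg_nonpos.mpr hq.le)
    have hBpos : (0:ℝ) < B n := lt_of_lt_of_le h3 hb
    have step2 : ((3:ℝ) ^ n) ^ (-(qf c n)) = Real.exp (-(ell n + c) * Real.log 3) := by
      rw [← Real.rpow_natCast 3 n, ← Real.rpow_mul (by norm_num),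
        Real.rpow_def_of_pos (by norm_num : (0:ℝ) < 3)]
      congr 1
      rw [qf]
      field_simp
      all_goals ring
    calc B n ^ (-(qf c n)) / qf c n ≤ ((3:ℝ) ^ n) ^ (-(qf c n)) / qf c n := by
          exact div_le_div_of_nonneg_right step1 hq.le
      _ = Real.exp (-(ell n + c) * Real.log 3) * n / (ell n + c) := by
          rw [step2, qf]
          field_simp

lemma upA (c : ℝ) :
    Tendsto (fun n : ℕ => Real.exp n ^ (-(qf c n)) / qf c n) atTop (𝓝 (Real.exp (-c))) := by
  have key := (log_div_ell_add c).const_mul (Real.exp (-c))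
  rw [mul_one] at key
  apply key.congr'
  filter_upwards [eventually_ge_atTop 2, ell_atTop.eventually_gt_atTop (-c)] with n hn he
  have h1 : (1:ℝ) < n := by exact_mod_cast Nat.lt_of_lt_of_le one_lt_two hn
  have hn0 : (0:ℝ) < n := by linarith
  have hl : 0 < Real.log n := Real.log_pos h1
  have hec : 0 < ell n + c := by linarith
  have e1 : Real.exp (n:ℝ) ^ (-(qf c n)) = Real.exp (-c) * (Real.log n / n) := by
    rw [← Real.exp_mul, show (n:ℝ) * (-(qf c n)) = -c + -ell n by
        rw [qf]; field_simp; ring,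
      Real.exp_add, exp_neg_ell n hn]
  rw [e1, qf]
  field_simp

lemma middle (c : ℝ) :
    Tendsto (fun n : ℕ => (1 + Real.exp (-(2*(n:ℝ)))) ^ (-(qf c n))) atTop (𝓝 1) := by
  have hb : Tendsto (fun n : ℕ => 1 + Real.exp (-(2*(n:ℝ)))) atTop (𝓝 1) := by
    have h2n : Tendsto (fun n : ℕ => -(2*(n:ℝ))) atTop atBot := by
      apply tendsto_neg_atBot_iff.mpr
      exact Tendsto.const_mul_atTop two_pos tendsto_natCast_atTop_atTop
    have h2 : Tendsto (fun n : ℕ => Real.exp (-(2*(n:ℝ)))) atTop (𝓝 0) :=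
      Real.tendsto_exp_atBot.comp h2n
    simpa using (tendsto_const_nhds (x := (1:ℝ))).add h2
  have hq : Tendsto (fun n : ℕ => -(qf c n)) atTop (𝓝 0) := by
    have := (q_to_zero c).neg; rw [neg_zero] at this; exact this
  have := hb.rpow hq (Or.inl one_ne_zero)
  simpa using this

lemma loA (c : ℝ) :
    Tendsto (fun n : ℕ => (Real.exp n + Real.exp (-(n:ℝ))) ^ (-(qf c n)) / qf c n)
      atTop (𝓝 (Real.exp (-c))) := by
  have key := (upA c).mul (middle c)
  rw [mul_one] at key
  apply key.congr'
  filter_upwards [eventually_ge_atTop 1] with n h1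
  have e1 : Real.exp (n:ℝ) + Real.exp (-(n:ℝ))
      = Real.exp (n:ℝ) * (1 + Real.exp (-(2*(n:ℝ)))) := by
    rw [mul_add, mul_one, ← Real.exp_add]
    ring_nf
  rw [e1, Real.mul_rpow (Real.exp_pos _).le (by positivity)]
  ring

lemma sandwich (c : ℝ) (n : ℕ) (hn : 2 ≤ n) (hq : 0 < qf c n) :
    Lo c n ≤ (∑ i ∈ Finset.Icc (2 : ℕ) (9 ^ n),
        Real.exp (-(n : ℝ)) *
          (Real.exp n + ((i : ℝ) - 1) * Real.exp (-(n : ℝ))) ^ (-(1 + ell n / n + c / n)))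
    ∧ (∑ i ∈ Finset.Icc (2 : ℕ) (9 ^ n),
        Real.exp (-(n : ℝ)) *
          (Real.exp n + ((i : ℝ) - 1) * Real.exp (-(n : ℝ))) ^ (-(1 + ell n / n + c / n)))
      ≤ Up c n := by
  have hn0 : (0:ℝ) < n := by exact_mod_cast Nat.lt_of_lt_of_le two_pos hn
  set q := qf c n with hqdef
  have hp1 : 1 + ell n / ↑n + c / ↑n = 1 + q := by
    rw [hqdef, qf, add_assoc, ← add_div]
  set p := 1 + q with hpdef
  have hp0 : 0 < p := by rw [hpdef]; linarith
  have hpne : p ≠ 1 := by rw [hpdef]; intro h; nlinarith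
  set r := Real.exp (-(n:ℝ)) with hr
  set s := Real.exp (n:ℝ) with hs
  have hrpos : 0 < r := Real.exp_pos _
  have hspos : 0 < s := Real.exp_pos _
  set f : ℝ → ℝ := fun t => r * (s + t * r) ^ (-p) with hf
  have hbase : ∀ x : ℝ, 0 ≤ x → 0 < s + x * r := by
    intro x hx; positivity
  have hanti : ∀ x₀ : ℝ, 0 ≤ x₀ → ∀ a : ℕ, AntitoneOn f (Set.Icc x₀ (x₀ + a)) := by
    intro x₀ hx₀ a x hx y hy hxy
    have hx0 : 0 ≤ x := le_trans hx₀ hx.1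
    have hy0 : 0 ≤ y := le_trans hx₀ hy.1
    apply mul_le_mul_of_nonneg_left ?_ hrpos.le
    apply Real.rpow_le_rpow_of_nonpos (hbase x hx0)
      (by nlinarith : s + x * r ≤ s + y * r)
      (by linarith : -p ≤ 0)
  have h9 : (1:ℕ) ≤ 9 ^ n := Nat.one_le_pow _ _ (by norm_num)
  have hcast : ((9 ^ n - 1 : ℕ):ℝ) = (9:ℝ)^n - 1 := by
    push_cast [h9]
    ring
  have hsum : (∑ i ∈ Finset.Icc (2 : ℕ) (9 ^ n),
        Real.exp (-(n : ℝ)) *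
          (Real.exp n + ((i : ℝ) - 1) * Real.exp (-(n : ℝ))) ^ (-(1 + ell n / n + c / n)))
      = ∑ i ∈ Finset.range (9 ^ n - 1), f ((i:ℝ) + 1) := by
    rw [← Finset.Ico_add_one_right_eq_Icc, Finset.sum_Ico_eq_sum_range]
    rw [show 9 ^ n + 1 - 2 = 9 ^ n - 1 by omega]
    apply Finset.sum_congr rfl
    intro i _
    rw [hp1]
    simp only [hf]
    congr 2
    push_cast
    ring
  have h1p : 1 - p = -q := by rw [hpdef]; ring
  have hpq : p - 1 = q := by rw [hpdef]; ring
  constructor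
  · -- lower bound
    have hlo := (hanti 1 zero_le_one (9 ^ n - 1)).integral_le_sum
    simp only [hf] at hlo
    rw [integ_aux r s 1 (1 + ((9 ^ n - 1 : ℕ):ℝ)) p hrpos (by positivity)
      (le_add_of_nonneg_right (by positivity)) hpne] at hlo
    rw [hsum]
    refine le_trans (le_of_eq ?_) (le_trans hlo (le_of_eq ?_))
    · rw [Lo, ← hqdef, ← hr, ← hs, h1p, hpq, hcast, one_mul]
      norm_num
    · apply Finset.sum_congr rfl
      intro i _
      congr 1
      push_cast
      ring
  · -- upper bound
    have hup := (hanti 0 le_rfl (9 ^ n - 1)).sum_le_integral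
    simp only [hf] at hup
    rw [integ_aux r s 0 (0 + ((9 ^ n - 1 : ℕ):ℝ)) p hrpos (by simpa using hspos)
      (by positivity) hpne] at hup
    rw [hsum]
    refine le_trans (le_of_eq ?_) (le_trans hup (le_of_eq ?_))
    · apply Finset.sum_congr rfl
      intro i _
      congr 1
      push_cast
      ring
    · rw [Up, ← hqdef, ← hr, ← hs, h1p, hpq, hcast]
      norm_num

end SecondTermAux

open SecondTermAux in
/-- The second term of the proof of Lemma 1 in Barrera–Ycart tends to `e^{-c}`:
`Σ_{i=2}^{9^n} e^{-n} (e^n + (i-1) e^{-n})^{-(1 + ℓ_n/n + c/n)} → e^{-c}`. -/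
theorem second_term_limit (c : ℝ) :
    Tendsto
      (fun n : ℕ => ∑ i ∈ Finset.Icc (2 : ℕ) (9 ^ n),
        Real.exp (-(n : ℝ)) *
          (Real.exp n + ((i : ℝ) - 1) * Real.exp (-(n : ℝ))) ^ (-(1 + ell n / n + c / n)))
      atTop (𝓝 (Real.exp (-c))) := by
  have he3 : Real.exp 1 ≤ 3 := Real.exp_one_lt_d9.le.trans (by norm_num)
  have hB1 : ∀ᶠ k : ℕ in atTop,
      (3:ℝ) ^ k ≤ Real.exp k + ((9:ℝ)^k - 1) * Real.exp (-(k:ℝ)) := by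
    filter_upwards [eventually_ge_atTop 0] with k _
    have hE : (0:ℝ) < Real.exp k := Real.exp_pos _
    have hE1 : (1:ℝ) ≤ Real.exp k := Real.one_le_exp (by positivity)
    have h1 : (3:ℝ)^k * Real.exp k ≤ 9^k := by
      rw [← Real.exp_one_pow, ← mul_pow]
      exact pow_le_pow_left₀ (by positivity) (by nlinarith) k
    have key : (3:ℝ)^k * Real.exp k ≤ Real.exp k * Real.exp k + ((9:ℝ)^k - 1) := by
      nlinarith
    calc (3:ℝ)^k = (3^k * Real.exp k) / Real.exp k := by field_simp
      _ ≤ (Real.exp k * Real.exp k + ((9:ℝ)^k - 1)) / Real.exp k := by gcongr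
      _ = Real.exp k + ((9:ℝ)^k - 1) * Real.exp (-(k:ℝ)) := by
          rw [Real.exp_neg]; field_simp
  have hB2 : ∀ᶠ k : ℕ in atTop,
      (3:ℝ) ^ k ≤ Real.exp k + (9:ℝ)^k * Real.exp (-(k:ℝ)) := by
    filter_upwards [eventually_ge_atTop 0] with k _
    have hE : (0:ℝ) < Real.exp k := Real.exp_pos _
    have h1 : (3:ℝ)^k * Real.exp k ≤ 9^k := by
      rw [← Real.exp_one_pow, ← mul_pow]
      exact pow_le_pow_left₀ (by positivity) (by nlinarith) k
    calc (3:ℝ)^k = (3^k * Real.exp k) / Real.exp k := by field_simp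
      _ ≤ (9:ℝ)^k / Real.exp k := by gcongr
      _ = (9:ℝ)^k * Real.exp (-(k:ℝ)) := by rw [Real.exp_neg]; field_simp
      _ ≤ Real.exp k + (9:ℝ)^k * Real.exp (-(k:ℝ)) := by linarith
  have hUpT : Tendsto (Up c) atTop (𝓝 (Real.exp (-c))) := by
    have h := (upA c).sub
      (tail c (fun k => Real.exp k + ((9:ℝ)^k - 1) * Real.exp (-(k:ℝ))) hB1)
    rw [sub_zero] at h
    apply h.congr
    intro k
    rw [Up, sub_div]
  have hLoT : Tendsto (Lo c) atTop (𝓝 (Real.exp (-c))) := by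
    have h := (loA c).sub
      (tail c (fun k => Real.exp k + (9:ℝ)^k * Real.exp (-(k:ℝ))) hB2)
    rw [sub_zero] at h
    apply h.congr
    intro k
    rw [Lo, sub_div]
  have hqev : ∀ᶠ k : ℕ in atTop, 0 < qf c k := by
    filter_upwards [ell_atTop.eventually_gt_atTop (-c), eventually_ge_atTop 1] with k h1 h2
    exact div_pos (by linarith) (by exact_mod_cast h2)
  apply tendsto_of_tendsto_of_tendsto_of_le_of_le' hLoT hUpT
  · filter_upwards [hqev, eventually_ge_atTop 2] with k h1 h2
    exact (sandwich c k h2 h1).1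
  · filter_upwards [hqev, eventually_ge_atTop 2] with k h1 h2
    exact (sandwich c k h2 h1).2
end
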